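/- Let (Ω, S) be a coherent configuration with all fibers isomorphic to C_p ≀ C_p and all inter-fiber relations of valency p, and let R denote the set of regular relations, N the union of within-fiber relations with the non-regular relations. Then either R = S or N = S. -/

import Mathlib

open Finset
open scoped Classical

/-- A coherent configuration on a finite set `Ω`: a partition `S` of `Ω × Ω` into nonempty
relations such that the diagonal is a union of relations, `S` is closed under transposition,
and the intersection numbers `c r s u` are well defined. -/
structure CoherentConfig (Ω : Type) [Fintype Ω] [DecidableEq Ω] where
  S : Finset (Finset (Ω × Ω))
  nonempty_mem : ∀ s ∈ S, s.Nonempty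
  partition : ∀ x : Ω × Ω, ∃! s, s ∈ S ∧ x ∈ s
  diag_union : ∀ s ∈ S, (∃ x ∈ s, x.1 = x.2) → ∀ y ∈ s, y.1 = y.2
  symm_mem : ∀ s ∈ S, s.image Prod.swap ∈ S
  c : Finset (Ω × Ω) → Finset (Ω × Ω) → Finset (Ω × Ω) → ℕ
  c_spec : ∀ r ∈ S, ∀ s ∈ S, ∀ u ∈ S, ∀ x ∈ u,
    (Finset.univ.filter (fun γ : Ω => (x.1, γ) ∈ r ∧ (γ, x.2) ∈ s)).card = c r s u

variable {Ω : Type} [Fintype Ω] [DecidableEq Ω]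

/-- The diagonal relation of a subset `Δ ⊆ Ω`. -/
def diagRel (Δ : Finset Ω) : Finset (Ω × Ω) := Δ.image (fun d => (d, d))

/-- `Δ` is a fiber of the coherent configuration if its diagonal is a basis relation. -/
def IsFiber (A : CoherentConfig Ω) (Δ : Finset Ω) : Prop := diagRel Δ ∈ A.S

/-- The transpose of a relation. -/
def star (s : Finset (Ω × Ω)) : Finset (Ω × Ω) := s.image Prod.swap

/-- Every point in the domain of `s` has exactly `n` out-neighbours along `s`. -/
def HasValency (s : Finset (Ω × Ω)) (n : ℕ) : Prop :=
  ∀ x ∈ s, (Finset.univ.filter fun γ : Ω => (x.1, γ) ∈ s).card = n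

/-- `s` is a thin basis relation of the fiber scheme on `Δ`. -/
def IsThinOn (A : CoherentConfig Ω) (Δ : Finset Ω) (s : Finset (Ω × Ω)) : Prop :=
  s ∈ A.S ∧ s ⊆ Δ ×ˢ Δ ∧ HasValency s 1

/-- The complex product of two sets of basis relations. -/
def cprod (A : CoherentConfig Ω) (T U : Finset (Finset (Ω × Ω))) : Finset (Finset (Ω × Ω)) :=
  A.S.filter fun u => ∃ t ∈ T, ∃ v ∈ U, A.c t v u ≠ 0

/-- `s` is a regular relation: `s s* s = {s}` as a complex product. -/
def Regular (A : CoherentConfig Ω) (s : Finset (Ω × Ω)) : Prop :=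
  cprod A (cprod A {s} {star s}) {s} = {s}

/-- The fiber scheme on `Δ` is isomorphic to the wreath product `C_p ≀ C_p`:
it has degree `p²`, exactly `p` thin relations forming a closed subset,
and all other basis relations have valency `p`. -/
def WreathFiber (p : ℕ) (A : CoherentConfig Ω) (Δ : Finset Ω) : Prop :=
  IsFiber A Δ ∧ Δ.card = p ^ 2 ∧
  (A.S.filter fun s => IsThinOn A Δ s).card = p ∧
  (∀ s ∈ A.S, s ⊆ Δ ×ˢ Δ → HasValency s 1 ∨ HasValency s p) ∧
  (∀ s t u : Finset (Ω × Ω), IsThinOn A Δ s → IsThinOn A Δ t → u ∈ A.S →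
    A.c s (star t) u ≠ 0 → IsThinOn A Δ u)

/-- The adjacency matrix of a relation. -/
def adjM (s : Finset (Ω × Ω)) : Matrix Ω Ω ℂ := fun α β => if (α, β) ∈ s then 1 else 0

namespace CCProof

variable {Ω : Type} [Fintype Ω] [DecidableEq Ω]

lemma mem_star {s : Finset (Ω × Ω)} {a b : Ω} : (a, b) ∈ star s ↔ (b, a) ∈ s := by
  constructor
  · intro h
    obtain ⟨q, hq, hq2⟩ := Finset.mem_image.1 h
    have : q = (b, a) := by
      have := congrArg Prod.swap hq2
      simpa [Prod.swap] using this
    rwa [this] at hq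
  · intro h
    exact Finset.mem_image.2 ⟨(b, a), h, rfl⟩

lemma star_star (s : Finset (Ω × Ω)) : star (star s) = s := by
  ext ⟨a, b⟩
  simp [mem_star]

lemma star_mem_S (A : CoherentConfig Ω) {s : Finset (Ω × Ω)} (hs : s ∈ A.S) :
    star s ∈ A.S := A.symm_mem s hs

lemma mem_diagRel {Δ : Finset Ω} {a b : Ω} : (a, b) ∈ diagRel Δ ↔ a ∈ Δ ∧ a = b := by
  constructor
  · intro h
    obtain ⟨d, hd, hd2⟩ := Finset.mem_image.1 h
    obtain ⟨h1, h2⟩ := Prod.mk.injEq .. ▸ hd2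
    constructor
    · rw [← h1]; exact hd
    · rw [← h1, ← h2]
  · rintro ⟨h1, rfl⟩
    exact Finset.mem_image.2 ⟨a, h1, rfl⟩

variable (A : CoherentConfig Ω)

noncomputable def relOf (x : Ω × Ω) : Finset (Ω × Ω) := (A.partition x).exists.choose

lemma relOf_mem_S (x : Ω × Ω) : relOf A x ∈ A.S := (A.partition x).exists.choose_spec.1

lemma mem_relOf (x : Ω × Ω) : x ∈ relOf A x := (A.partition x).exists.choose_spec.2

lemma relOf_eq {s : Finset (Ω × Ω)} {x : Ω × Ω} (hs : s ∈ A.S) (hx : x ∈ s) :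
    relOf A x = s := by
  obtain ⟨u, _hu, huniq⟩ := A.partition x
  have h1 := huniq s ⟨hs, hx⟩
  have h2 := huniq (relOf A x) ⟨relOf_mem_S A x, mem_relOf A x⟩
  rw [h2, h1]

lemma rel_eq_rel {s t : Finset (Ω × Ω)} {x : Ω × Ω} (hs : s ∈ A.S) (ht : t ∈ A.S)
    (hxs : x ∈ s) (hxt : x ∈ t) : s = t := by
  rw [← relOf_eq A hs hxs, ← relOf_eq A ht hxt]

/-- out-neighbours -/
def nbr (s : Finset (Ω × Ω)) (α : Ω) : Finset Ω := Finset.univ.filter (fun γ => (α, γ) ∈ s)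

lemma mem_nbr {s : Finset (Ω × Ω)} {α γ : Ω} : γ ∈ nbr s α ↔ (α, γ) ∈ s := by
  simp [nbr]

lemma nbr_card_of_val {s : Finset (Ω × Ω)} {n : ℕ} (hv : HasValency s n) {α β : Ω}
    (h : (α, β) ∈ s) : (nbr s α).card = n := hv (α, β) h

/-- the main transfer principle: constancy of intersection numbers -/
lemma transfer {r s u : Finset (Ω × Ω)} (hr : r ∈ A.S) (hs : s ∈ A.S) (hu : u ∈ A.S)
    {x y x' y' : Ω} (hxy : (x, y) ∈ u) (hxy' : (x', y') ∈ u)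
    (h : ∃ γ, (x, γ) ∈ r ∧ (γ, y) ∈ s) : ∃ γ, (x', γ) ∈ r ∧ (γ, y') ∈ s := by
  have h1 := A.c_spec r hr s hs u hu (x, y) hxy
  have h2 := A.c_spec r hr s hs u hu (x', y') hxy'
  obtain ⟨γ, hγ⟩ := h
  have hne : (Finset.univ.filter (fun γ : Ω => (x, γ) ∈ r ∧ (γ, y) ∈ s)).Nonempty :=
    ⟨γ, by simpa using hγ⟩
  have : (Finset.univ.filter (fun γ : Ω => (x', γ) ∈ r ∧ (γ, y') ∈ s)).card ≠ 0 := by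
    rw [h2, ← h1]
    exact Finset.card_ne_zero_of_mem hne.choose_spec
  obtain ⟨γ', hγ'⟩ := Finset.card_ne_zero.1 this
  exact ⟨γ', by simpa using (Finset.mem_filter.1 hγ').2⟩

end CCProof

namespace CCProof
set_option linter.unusedSectionVars false

variable {Ω : Type} [Fintype Ω] [DecidableEq Ω] (A : CoherentConfig Ω)

lemma c_ne_zero {r s u : Finset (Ω × Ω)} (hr : r ∈ A.S) (hs : s ∈ A.S) (hu : u ∈ A.S)
    {x y γ : Ω} (hxy : (x, y) ∈ u) (h1 : (x, γ) ∈ r) (h2 : (γ, y) ∈ s) :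
    A.c r s u ≠ 0 := by
  rw [← A.c_spec r hr s hs u hu (x, y) hxy]
  exact Finset.card_ne_zero_of_mem (Finset.mem_filter.2 ⟨Finset.mem_univ γ, h1, h2⟩)

lemma witness_of_c {r s u : Finset (Ω × Ω)} (hr : r ∈ A.S) (hs : s ∈ A.S) (hu : u ∈ A.S)
    {x y : Ω} (hxy : (x, y) ∈ u) (h : A.c r s u ≠ 0) :
    ∃ γ, (x, γ) ∈ r ∧ (γ, y) ∈ s := by
  rw [← A.c_spec r hr s hs u hu (x, y) hxy] at h
  obtain ⟨γ, hγ⟩ := Finset.card_ne_zero.1 h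
  exact ⟨γ, (Finset.mem_filter.1 hγ).2⟩

/-- pointwise characterization of regularity -/
def Reg (s : Finset (Ω × Ω)) : Prop :=
  ∀ ⦃x γ δ y : Ω⦄, (x, γ) ∈ s → (δ, γ) ∈ s → (δ, y) ∈ s → (x, y) ∈ s

lemma regular_iff {s : Finset (Ω × Ω)} (hs : s ∈ A.S) : Regular A s ↔ Reg s := by
  have hstar := star_mem_S A hs
  constructor
  · intro hre x γ δ y h1 h2 h3
    set v := relOf A (x, δ) with hv
    have hvS : v ∈ A.S := relOf_mem_S A _
    have hvmem : (x, δ) ∈ v := mem_relOf A _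
    have hcv : A.c s (star s) v ≠ 0 :=
      c_ne_zero A hs hstar hvS hvmem h1 (mem_star.2 h2)
    set u := relOf A (x, y) with hu
    have huS : u ∈ A.S := relOf_mem_S A _
    have humem : (x, y) ∈ u := mem_relOf A _
    have hcu : A.c v s u ≠ 0 := c_ne_zero A hvS hs huS humem hvmem h3
    have huP : u ∈ cprod A (cprod A {s} {star s}) {s} := by
      refine Finset.mem_filter.2 ⟨huS, v, ?_, s, Finset.mem_singleton_self s, hcu⟩
      exact Finset.mem_filter.2 ⟨hvS, s, Finset.mem_singleton_self s,
        star s, Finset.mem_singleton_self _, hcv⟩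
    rw [Regular] at hre
    rw [hre] at huP
    have := Finset.mem_singleton.1 huP
    rw [← this]
    exact humem
  · intro hreg
    ext u
    simp only [Finset.mem_singleton]
    constructor
    · intro hu
      simp only [cprod, Finset.mem_filter, Finset.mem_singleton] at hu
      obtain ⟨huS, v, ⟨hvS, t, ht, w, hw, hcv⟩, s', hs', hcu⟩ := hu
      rw [ht, hw] at hcv
      rw [hs'] at hcu
      obtain ⟨⟨x, y⟩, hxy⟩ := A.nonempty_mem u huS
      obtain ⟨δ, hxδ, hδy⟩ := witness_of_c A hvS hs huS hxy hcu
      obtain ⟨γ, hxγ, hγδ⟩ := witness_of_c A hs hstar hvS hxδ hcv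
      have hδγ : (δ, γ) ∈ s := mem_star.1 hγδ
      exact rel_eq_rel A huS hs hxy (hreg hxγ hδγ hδy)
    · rintro rfl
      obtain ⟨⟨x₀, y₀⟩, hxy₀⟩ := A.nonempty_mem _ hs
      set v := relOf A (x₀, x₀) with hv
      have hvS : v ∈ A.S := relOf_mem_S A _
      have hvmem : (x₀, x₀) ∈ v := mem_relOf A _
      refine Finset.mem_filter.2 ⟨hs, v, ?_, u, Finset.mem_singleton_self _, ?_⟩
      · exact Finset.mem_filter.2 ⟨hvS, u, Finset.mem_singleton_self _,
          star u, Finset.mem_singleton_self _,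
          c_ne_zero A hs (star_mem_S A hs) hvS hvmem hxy₀ (mem_star.2 hxy₀)⟩
      · exact c_ne_zero A hvS hs hs hxy₀ hvmem hxy₀

lemma Reg.star {s : Finset (Ω × Ω)} (h : Reg s) : Reg (star s) := by
  intro x γ δ y h1 h2 h3
  exact mem_star.2 (h (mem_star.1 h3) (mem_star.1 h2) (mem_star.1 h1))

lemma regular_star {s : Finset (Ω × Ω)} (hs : s ∈ A.S) (h : Regular A s) :
    Regular A (star s) := by
  rw [regular_iff A (star_mem_S A hs)]
  exact ((regular_iff A hs).1 h).star

lemma not_regular_star {s : Finset (Ω × Ω)} (hs : s ∈ A.S) (h : ¬ Regular A s) :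
    ¬ Regular A (star s) := by
  intro h2
  exact h (by simpa [star_star] using regular_star A (star_mem_S A hs) h2)

end CCProof

namespace CCProof
set_option linter.unusedSectionVars false
set_option maxHeartbeats 1000000

variable {Ω : Type} [Fintype Ω] [DecidableEq Ω] (A : CoherentConfig Ω)

lemma diagRel_fst (Δ : Finset Ω) : (diagRel Δ).image Prod.fst = Δ := by
  ext a
  simp only [Finset.mem_image]
  constructor
  · rintro ⟨q, hq, rfl⟩
    obtain ⟨h1, h2⟩ := mem_diagRel.1 (show (q.1, q.2) ∈ diagRel Δ from hq)
    exact h1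
  · intro ha
    exact ⟨(a, a), mem_diagRel.2 ⟨ha, rfl⟩, rfl⟩

noncomputable def fiberOf (α : Ω) : Finset Ω := (relOf A (α, α)).image Prod.fst

lemma diagRel_fiberOf (α : Ω) : diagRel (fiberOf A α) = relOf A (α, α) := by
  have hd : ∀ y ∈ relOf A (α, α), y.1 = y.2 :=
    A.diag_union _ (relOf_mem_S A _) ⟨(α, α), mem_relOf A _, rfl⟩
  ext ⟨a, b⟩
  rw [mem_diagRel]
  constructor
  · rintro ⟨ha, rfl⟩
    obtain ⟨q, hq, rfl⟩ := Finset.mem_image.1 ha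
    have := hd q hq
    have hq2 : q = (q.1, q.1) := by
      rw [Prod.ext_iff]; exact ⟨rfl, this.symm⟩
    rwa [← hq2]
  · intro h
    have h1 := hd _ h
    refine ⟨Finset.mem_image.2 ⟨(a, b), h, rfl⟩, h1⟩

lemma isFiber_fiberOf (α : Ω) : IsFiber A (fiberOf A α) := by
  rw [IsFiber, diagRel_fiberOf]; exact relOf_mem_S A _

lemma mem_fiberOf (α : Ω) : α ∈ fiberOf A α :=
  Finset.mem_image.2 ⟨(α, α), mem_relOf A _, rfl⟩

lemma fiber_eq_fiberOf {Δ : Finset Ω} {α : Ω} (hΔ : IsFiber A Δ) (hα : α ∈ Δ) :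
    Δ = fiberOf A α := by
  have h1 : (α, α) ∈ diagRel Δ := mem_diagRel.2 ⟨hα, rfl⟩
  have h2 : diagRel Δ = relOf A (α, α) := (relOf_eq A hΔ h1).symm
  rw [← diagRel_fst Δ, h2]; rfl

lemma rel_sub_fibers {s : Finset (Ω × Ω)} (hs : s ∈ A.S) {a b : Ω} (hab : (a, b) ∈ s) :
    s ⊆ (fiberOf A a) ×ˢ (fiberOf A b) := by
  intro ⟨x, y⟩ hxy
  have hfa := isFiber_fiberOf A a
  have hfb := isFiber_fiberOf A b
  have h1 : ∃ γ, (x, γ) ∈ diagRel (fiberOf A a) ∧ (γ, y) ∈ s := by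
    refine transfer A hfa hs hs hab hxy ⟨a, mem_diagRel.2 ⟨mem_fiberOf A a, rfl⟩, hab⟩
  have h2 : ∃ γ, (x, γ) ∈ s ∧ (γ, y) ∈ diagRel (fiberOf A b) := by
    refine transfer A hs hfb hs hab hxy ⟨b, hab, mem_diagRel.2 ⟨mem_fiberOf A b, rfl⟩⟩
  obtain ⟨γ, hγ1, _⟩ := h1
  obtain ⟨γ', _, hγ'2⟩ := h2
  obtain ⟨hx, rfl⟩ := mem_diagRel.1 hγ1
  obtain ⟨hy1, hy2⟩ := mem_diagRel.1 hγ'2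
  rw [Finset.mem_product]
  exact ⟨hx, hy2 ▸ hy1⟩

/-- every point of the source fiber has an out-neighbour -/
lemma dom_full {s : Finset (Ω × Ω)} {Δ Γ : Finset Ω} (hs : s ∈ A.S) (hsub : s ⊆ Δ ×ˢ Γ)
    (hΔ : IsFiber A Δ) {α : Ω} (hα : α ∈ Δ) : (nbr s α).Nonempty := by
  obtain ⟨⟨a, b⟩, hab⟩ := A.nonempty_mem s hs
  have ha : a ∈ Δ := (Finset.mem_product.1 (hsub hab)).1
  have h := transfer A hs (star_mem_S A hs) hΔ
    (mem_diagRel.2 ⟨ha, rfl⟩) (mem_diagRel.2 ⟨hα, rfl⟩) ⟨b, hab, mem_star.2 hab⟩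
  obtain ⟨γ, hγ, _⟩ := h
  exact ⟨γ, mem_nbr.2 hγ⟩

lemma filter_fst_card (s : Finset (Ω × Ω)) (α : Ω) :
    (s.filter (fun q => q.1 = α)).card = (nbr s α).card := by
  refine Finset.card_bij (fun q _ => q.2) ?_ ?_ ?_
  · rintro ⟨a, b⟩ hq
    obtain ⟨h1, h2⟩ := Finset.mem_filter.1 hq
    simp only at h2
    subst h2
    exact mem_nbr.2 h1
  · rintro ⟨a, b⟩ ha ⟨a', b'⟩ ha' h
    obtain ⟨_, h2⟩ := Finset.mem_filter.1 ha
    obtain ⟨_, h2'⟩ := Finset.mem_filter.1 ha'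
    simp only at h
    rw [Prod.ext_iff]
    exact ⟨h2.trans h2'.symm, h⟩
  · intro γ hγ
    exact ⟨(α, γ), Finset.mem_filter.2 ⟨mem_nbr.1 hγ, rfl⟩, rfl⟩

lemma card_rel {s : Finset (Ω × Ω)} {Δ Γ : Finset Ω} {n : ℕ} (hs : s ∈ A.S)
    (hsub : s ⊆ Δ ×ˢ Γ) (hΔ : IsFiber A Δ) (hv : HasValency s n) :
    s.card = Δ.card * n := by
  have h1 : s.card = ∑ α ∈ Δ, (s.filter (fun q => q.1 = α)).card := by
    refine Finset.card_eq_sum_card_fiberwise ?_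
    intro q hq
    exact (Finset.mem_product.1 (hsub hq)).1
  rw [h1]
  rw [Finset.sum_congr rfl (fun α hα => ?_), Finset.sum_const, smul_eq_mul]
  rw [filter_fst_card]
  obtain ⟨β, hβ⟩ := dom_full A hs hsub hΔ hα
  exact nbr_card_of_val hv (mem_nbr.1 hβ)

lemma card_star (s : Finset (Ω × Ω)) : (star s).card = s.card :=
  Finset.card_image_of_injective s Prod.swap_injective

end CCProof

namespace CCProof
set_option linter.unusedSectionVars false
set_option maxHeartbeats 1000000

variable {Ω : Type} [Fintype Ω] [DecidableEq Ω] (A : CoherentConfig Ω)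

/-- the thin relations of the fiber Δ -/
noncomputable def thins (Δ : Finset Ω) : Finset (Finset (Ω × Ω)) :=
  A.S.filter (fun s => IsThinOn A Δ s)

/-- the union of the thin relations on Δ -/
noncomputable def eRel (Δ : Finset Ω) : Finset (Ω × Ω) := (thins A Δ).biUnion id

lemma mem_thins {Δ : Finset Ω} {θ : Finset (Ω × Ω)} :
    θ ∈ thins A Δ ↔ IsThinOn A Δ θ := by
  constructor
  · intro h; exact (Finset.mem_filter.1 h).2
  · intro h; exact Finset.mem_filter.2 ⟨h.1, h⟩

lemma mem_eRel {Δ : Finset Ω} {q : Ω × Ω} :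
    q ∈ eRel A Δ ↔ ∃ θ, IsThinOn A Δ θ ∧ q ∈ θ := by
  simp only [eRel, Finset.mem_biUnion, id_eq, mem_thins]

lemma diag_isThin {Δ : Finset Ω} (hΔ : IsFiber A Δ) : IsThinOn A Δ (diagRel Δ) := by
  refine ⟨hΔ, ?_, ?_⟩
  · intro q hq
    obtain ⟨h1, h2⟩ := mem_diagRel.1 (show (q.1, q.2) ∈ diagRel Δ from hq)
    rw [Finset.mem_product]
    exact ⟨h1, h2 ▸ h1⟩
  · intro x hx
    obtain ⟨h1, _⟩ := mem_diagRel.1 (show (x.1, x.2) ∈ diagRel Δ from hx)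
    have : Finset.univ.filter (fun γ : Ω => (x.1, γ) ∈ diagRel Δ) = {x.1} := by
      ext γ
      simp only [Finset.mem_filter, Finset.mem_univ, true_and, Finset.mem_singleton,
        mem_diagRel]
      constructor
      · rintro ⟨_, rfl⟩; rfl
      · rintro rfl; exact ⟨h1, rfl⟩
    rw [this, Finset.card_singleton]

lemma thin_card {Δ : Finset Ω} {θ : Finset (Ω × Ω)} (hΔ : IsFiber A Δ)
    (hθ : IsThinOn A Δ θ) : θ.card = Δ.card := by
  have := card_rel A hθ.1 hθ.2.1 hΔ hθ.2.2
  rwa [mul_one] at this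

lemma val_exclusive {s : Finset (Ω × Ω)} {m n : ℕ} (hs : s.Nonempty)
    (h1 : HasValency s m) (h2 : HasValency s n) : m = n := by
  obtain ⟨x, hx⟩ := hs
  rw [← h1 x hx, ← h2 x hx]

section WithP
variable {p : ℕ}

lemma val_p_of_not_thin {Δ : Finset Ω} {s : Finset (Ω × Ω)}
    (hW : WreathFiber p A Δ) (hs : s ∈ A.S) (hsub : s ⊆ Δ ×ˢ Δ)
    (hnt : ¬ IsThinOn A Δ s) : HasValency s p := by
  rcases hW.2.2.2.1 s hs hsub with h | h
  · exact absurd ⟨hs, hsub, h⟩ hnt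
  · exact h

lemma thin_star {Δ : Finset Ω} (hp : p.Prime) (hW : WreathFiber p A Δ) {θ : Finset (Ω × Ω)}
    (hθ : IsThinOn A Δ θ) : IsThinOn A Δ (star θ) := by
  have hΔ : IsFiber A Δ := hW.1
  have hS : star θ ∈ A.S := star_mem_S A hθ.1
  have hsub : star θ ⊆ Δ ×ˢ Δ := by
    intro ⟨a, b⟩ h
    have := hθ.2.1 (mem_star.1 h)
    rw [Finset.mem_product] at this ⊢
    exact ⟨this.2, this.1⟩
  refine ⟨hS, hsub, ?_⟩
  by_contra hv
  have hvp : HasValency (star θ) p := val_p_of_not_thin A hW hS hsub (fun h => hv h.2.2)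
  have h1 : (star θ).card = Δ.card * p := card_rel A hS hsub hΔ hvp
  have h2 : (star θ).card = Δ.card := by rw [card_star]; exact thin_card A hΔ hθ
  have hΔpos : 0 < Δ.card := by
    rw [hW.2.1]
    exact pow_pos hp.pos 2
  have : p = 1 := by
    have := h1.symm.trans h2
    nth_rewrite 2 [← mul_one Δ.card] at this
    exact Nat.eq_of_mul_eq_mul_left hΔpos this
  exact hp.one_lt.ne' this

end WithP

/-- pointwise composition of relations -/
def pcomp (s t : Finset (Ω × Ω)) : Finset (Ω × Ω) :=
  Finset.univ.filter (fun q => ∃ γ, (q.1, γ) ∈ s ∧ (γ, q.2) ∈ t)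

lemma mem_pcomp {s t : Finset (Ω × Ω)} {a b : Ω} :
    (a, b) ∈ pcomp s t ↔ ∃ γ, (a, γ) ∈ s ∧ (γ, b) ∈ t := by
  simp [pcomp]

lemma pcomp_assoc (r s t : Finset (Ω × Ω)) :
    pcomp (pcomp r s) t = pcomp r (pcomp s t) := by
  ext ⟨a, b⟩
  simp only [mem_pcomp]
  constructor
  · rintro ⟨γ, ⟨δ, h1, h2⟩, h3⟩
    exact ⟨δ, h1, γ, h2, h3⟩
  · rintro ⟨δ, h1, γ, h2, h3⟩
    exact ⟨γ, ⟨δ, h1, h2⟩, h3⟩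

lemma pcomp_diag_right {s : Finset (Ω × Ω)} {X Δ : Finset Ω} (hsub : s ⊆ X ×ˢ Δ) :
    pcomp s (diagRel Δ) = s := by
  ext ⟨a, b⟩
  rw [mem_pcomp]
  constructor
  · rintro ⟨γ, h1, h2⟩
    obtain ⟨_, rfl⟩ := mem_diagRel.1 h2
    exact h1
  · intro h
    exact ⟨b, h, mem_diagRel.2 ⟨(Finset.mem_product.1 (hsub h)).2, rfl⟩⟩

lemma pcomp_diag_left {s : Finset (Ω × Ω)} {X Δ : Finset Ω} (hsub : s ⊆ Δ ×ˢ X) :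
    pcomp (diagRel Δ) s = s := by
  ext ⟨a, b⟩
  rw [mem_pcomp]
  constructor
  · rintro ⟨γ, h1, h2⟩
    obtain ⟨_, rfl⟩ := mem_diagRel.1 h1
    exact h2
  · intro h
    exact ⟨a, mem_diagRel.2 ⟨(Finset.mem_product.1 (hsub h)).1, rfl⟩, h⟩

lemma pcomp_sub {s t : Finset (Ω × Ω)} {X Y Z W : Finset Ω} (hs : s ⊆ X ×ˢ Y)
    (ht : t ⊆ Z ×ˢ W) : pcomp s t ⊆ X ×ˢ W := by
  intro ⟨a, b⟩ h
  obtain ⟨γ, h1, h2⟩ := mem_pcomp.1 h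
  rw [Finset.mem_product]
  exact ⟨(Finset.mem_product.1 (hs h1)).1, (Finset.mem_product.1 (ht h2)).2⟩

/-- the function associated with a thin relation -/
noncomputable def tf (θ : Finset (Ω × Ω)) (α : Ω) : Ω :=
  if h : (nbr θ α).Nonempty then h.choose else α

lemma tf_mem {Δ : Finset Ω} {θ : Finset (Ω × Ω)} (hΔ : IsFiber A Δ)
    (hθ : IsThinOn A Δ θ) {α : Ω} (hα : α ∈ Δ) : (α, tf θ α) ∈ θ := by
  have h : (nbr θ α).Nonempty := dom_full A hθ.1 hθ.2.1 hΔ hα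
  rw [tf, dif_pos h]
  exact mem_nbr.1 h.choose_spec

lemma tf_unique {Δ : Finset Ω} {θ : Finset (Ω × Ω)} (hθ : IsThinOn A Δ θ) {α γ : Ω}
    (h : (α, γ) ∈ θ) : γ = tf θ α := by
  have hne : (nbr θ α).Nonempty := ⟨γ, mem_nbr.2 h⟩
  have hc : (nbr θ α).card = 1 := nbr_card_of_val hθ.2.2 h
  have hmem : tf θ α ∈ nbr θ α := by
    simp only [tf, dif_pos hne]
    exact hne.choose_spec
  obtain ⟨z, hz⟩ := Finset.card_eq_one.1 hc
  have h3 : γ ∈ nbr θ α := mem_nbr.2 h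
  rw [hz, Finset.mem_singleton] at hmem h3
  rw [h3, hmem]

lemma tf_inj {Δ : Finset Ω} {θ : Finset (Ω × Ω)} {p : ℕ} (hp : p.Prime)
    (hW : WreathFiber p A Δ) (hθ : IsThinOn A Δ θ) {a b : Ω} (ha : a ∈ Δ) (hb : b ∈ Δ)
    (h : tf θ a = tf θ b) : a = b := by
  have hΔ : IsFiber A Δ := hW.1
  have hsθ := thin_star A hp hW hθ
  have h1 : (tf θ a, a) ∈ star θ := mem_star.2 (tf_mem A hΔ hθ ha)
  have h2 : (tf θ a, b) ∈ star θ := by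
    rw [h]; exact mem_star.2 (tf_mem A hΔ hθ hb)
  have e1 := tf_unique A hsθ h1
  have e2 := tf_unique A hsθ h2
  exact e1.trans e2.symm

lemma pcomp_star_self {Δ : Finset Ω} {θ : Finset (Ω × Ω)} {p : ℕ} (hp : p.Prime)
    (hW : WreathFiber p A Δ) (hθ : IsThinOn A Δ θ) :
    pcomp θ (star θ) = diagRel Δ := by
  have hΔ : IsFiber A Δ := hW.1
  ext ⟨a, b⟩
  rw [mem_pcomp, mem_diagRel]
  constructor
  · rintro ⟨γ, h1, h2⟩
    have h2' : (b, γ) ∈ θ := mem_star.1 h2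
    have ha : a ∈ Δ := (Finset.mem_product.1 (hθ.2.1 h1)).1
    have hb : b ∈ Δ := (Finset.mem_product.1 (hθ.2.1 h2')).1
    have e1 := tf_unique A hθ h1
    have e2 := tf_unique A hθ h2'
    exact ⟨ha, tf_inj A hp hW hθ ha hb (e1.symm.trans e2)⟩
  · rintro ⟨ha, rfl⟩
    exact ⟨tf θ a, tf_mem A hΔ hθ ha, mem_star.2 (tf_mem A hΔ hθ ha)⟩

end CCProof

namespace CCProof
set_option linter.unusedSectionVars false
set_option maxHeartbeats 1000000

variable {Ω : Type} [Fintype Ω] [DecidableEq Ω] (A : CoherentConfig Ω) {p : ℕ}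

/-- composing a basis relation with a thin relation on the right gives a basis relation -/
lemma pcomp_mem_S_right {Δ Λ : Finset Ω} (hp : p.Prime) (hW : WreathFiber p A Δ)
    {s θ : Finset (Ω × Ω)} (hs : s ∈ A.S) (hsub : s ⊆ Λ ×ˢ Δ)
    (hθ : IsThinOn A Δ θ) : pcomp s θ ∈ A.S := by
  have hΔ : IsFiber A Δ := hW.1
  obtain ⟨⟨a, b⟩, hab⟩ := A.nonempty_mem s hs
  have hb : b ∈ Δ := (Finset.mem_product.1 (hsub hab)).2
  have hbθ : (b, tf θ b) ∈ θ := tf_mem A hΔ hθ hb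
  have habC : (a, tf θ b) ∈ pcomp s θ := mem_pcomp.2 ⟨b, hab, hbθ⟩
  set u := relOf A (a, tf θ b) with hu
  have huS : u ∈ A.S := relOf_mem_S A _
  have humem : (a, tf θ b) ∈ u := mem_relOf A _
  have hu_sub : u ⊆ pcomp s θ := by
    intro ⟨x, y⟩ hxy
    obtain ⟨γ, h1, h2⟩ := transfer A hs hθ.1 huS humem hxy ⟨b, hab, hbθ⟩
    exact mem_pcomp.2 ⟨γ, h1, h2⟩
  have h_im : pcomp s θ ⊆ s.image (fun q => (q.1, tf θ q.2)) := by
    intro ⟨x, y⟩ h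
    obtain ⟨γ, h1, h2⟩ := mem_pcomp.1 h
    refine Finset.mem_image.2 ⟨(x, γ), h1, ?_⟩
    rw [Prod.mk.injEq]
    exact ⟨rfl, (tf_unique A hθ h2).symm⟩
  have hc1 : (pcomp s θ).card ≤ s.card :=
    le_trans (Finset.card_le_card h_im) Finset.card_image_le
  have hsθ := thin_star A hp hW hθ
  have hs_im : s ⊆ u.image (fun q => (q.1, tf (star θ) q.2)) := by
    intro ⟨x, y⟩ hxy
    obtain ⟨γ, h1, h2⟩ := transfer A huS hsθ.1 hs hab hxy
      ⟨tf θ b, humem, mem_star.2 hbθ⟩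
    refine Finset.mem_image.2 ⟨(x, γ), h1, ?_⟩
    rw [Prod.mk.injEq]
    exact ⟨rfl, (tf_unique A hsθ h2).symm⟩
  have hc2 : s.card ≤ u.card :=
    le_trans (Finset.card_le_card hs_im) Finset.card_image_le
  have : u = pcomp s θ := Finset.eq_of_subset_of_card_le hu_sub (hc1.trans hc2)
  rw [← this]
  exact huS

lemma nbr_pcomp_right {Δ Λ : Finset Ω} (hΔ : IsFiber A Δ) {s θ : Finset (Ω × Ω)}
    (hsub : s ⊆ Λ ×ˢ Δ) (hθ : IsThinOn A Δ θ) (lam : Ω) :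
    nbr (pcomp s θ) lam = (nbr s lam).image (tf θ) := by
  ext z
  rw [mem_nbr, mem_pcomp]
  constructor
  · rintro ⟨γ, h1, h2⟩
    exact Finset.mem_image.2 ⟨γ, mem_nbr.2 h1, (tf_unique A hθ h2).symm⟩
  · intro h
    obtain ⟨γ, hγ, rfl⟩ := Finset.mem_image.1 h
    have h1 := mem_nbr.1 hγ
    have hγΔ : γ ∈ Δ := (Finset.mem_product.1 (hsub h1)).2
    exact ⟨γ, h1, tf_mem A hΔ hθ hγΔ⟩

lemma pcomp_thin_thin {Δ : Finset Ω} (hp : p.Prime) (hW : WreathFiber p A Δ)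
    {θ θ' : Finset (Ω × Ω)} (hθ : IsThinOn A Δ θ) (hθ' : IsThinOn A Δ θ') :
    IsThinOn A Δ (pcomp θ θ') := by
  have hΔ : IsFiber A Δ := hW.1
  have huS : pcomp θ θ' ∈ A.S := pcomp_mem_S_right A hp hW hθ.1 hθ.2.1 hθ'
  obtain ⟨⟨a, b⟩, hab⟩ := A.nonempty_mem θ hθ.1
  have hb : b ∈ Δ := (Finset.mem_product.1 (hθ.2.1 hab)).2
  have hmem : (a, tf θ' b) ∈ pcomp θ θ' := mem_pcomp.2 ⟨b, hab, tf_mem A hΔ hθ' hb⟩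
  refine hW.2.2.2.2 θ (star θ') (pcomp θ θ') hθ (thin_star A hp hW hθ') huS ?_
  rw [star_star]
  exact c_ne_zero A hθ.1 hθ'.1 huS hmem hab (tf_mem A hΔ hθ' hb)

lemma card_nbr_eRel {Δ : Finset Ω} (hW : WreathFiber p A Δ) {y : Ω} (hy : y ∈ Δ) :
    (nbr (eRel A Δ) y).card = p := by
  have hΔ : IsFiber A Δ := hW.1
  have h1 : nbr (eRel A Δ) y = (thins A Δ).biUnion (fun θ => nbr θ y) := by
    ext z
    simp only [mem_nbr, mem_eRel, Finset.mem_biUnion, mem_thins]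
  have hdisj : ∀ θ ∈ thins A Δ, ∀ θ' ∈ thins A Δ, θ ≠ θ' →
      Disjoint (nbr θ y) (nbr θ' y) := by
    intro θ hθ θ' hθ' hne
    rw [Finset.disjoint_left]
    intro z hz hz'
    exact hne (rel_eq_rel A (((mem_thins A).1 hθ)).1 (((mem_thins A).1 hθ')).1
      (mem_nbr.1 hz) (mem_nbr.1 hz'))
  rw [h1, Finset.card_biUnion hdisj]
  have : ∀ θ ∈ thins A Δ, (nbr θ y).card = 1 := by
    intro θ hθ
    rw [mem_thins A] at hθ
    exact nbr_card_of_val hθ.2.2 (tf_mem A hΔ hθ hy)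
  rw [Finset.sum_congr rfl this, Finset.sum_const, smul_eq_mul, mul_one]
  exact hW.2.2.1

lemma eRel_sub {Δ : Finset Ω} : eRel A Δ ⊆ Δ ×ˢ Δ := by
  intro q hq
  obtain ⟨θ, h1, h2⟩ := (mem_eRel A).1 hq
  exact h1.2.1 h2

lemma eRel_refl {Δ : Finset Ω} (hΔ : IsFiber A Δ) {α : Ω} (hα : α ∈ Δ) :
    (α, α) ∈ eRel A Δ :=
  (mem_eRel A).2 ⟨diagRel Δ, diag_isThin A hΔ, mem_diagRel.2 ⟨hα, rfl⟩⟩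

lemma eRel_symm {Δ : Finset Ω} (hp : p.Prime) (hW : WreathFiber p A Δ) {a b : Ω}
    (h : (a, b) ∈ eRel A Δ) : (b, a) ∈ eRel A Δ := by
  obtain ⟨θ, h1, h2⟩ := (mem_eRel A).1 h
  exact (mem_eRel A).2 ⟨star θ, thin_star A hp hW h1, mem_star.2 h2⟩

lemma eRel_trans {Δ : Finset Ω} (hp : p.Prime) (hW : WreathFiber p A Δ) {a b c : Ω}
    (h1 : (a, b) ∈ eRel A Δ) (h2 : (b, c) ∈ eRel A Δ) : (a, c) ∈ eRel A Δ := by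
  obtain ⟨θ, hθ, hm⟩ := (mem_eRel A).1 h1
  obtain ⟨θ', hθ', hm'⟩ := (mem_eRel A).1 h2
  set u := relOf A (a, c) with hu
  have huS : u ∈ A.S := relOf_mem_S A _
  have humem : (a, c) ∈ u := mem_relOf A _
  have : IsThinOn A Δ u := by
    refine hW.2.2.2.2 θ (star θ') u hθ (thin_star A hp hW hθ') huS ?_
    rw [star_star]
    exact c_ne_zero A hθ.1 hθ'.1 huS humem hm hm'
  exact (mem_eRel A).2 ⟨u, this, humem⟩

end CCProof

namespace CCProof
set_option linter.unusedSectionVars false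
set_option maxHeartbeats 1000000

variable {Ω : Type} [Fintype Ω] [DecidableEq Ω] (A : CoherentConfig Ω) {p : ℕ}

lemma stabilizer_full {Δ Λ : Finset Ω} (hp : p.Prime) (hW : WreathFiber p A Δ)
    {s η₀ : Finset (Ω × Ω)} (hsub : s ⊆ Λ ×ˢ Δ) (hη : IsThinOn A Δ η₀)
    (hne : η₀ ≠ diagRel Δ) (hstab : pcomp s η₀ = s) :
    ∀ θ, IsThinOn A Δ θ → pcomp s θ = s := by
  classical
  set Θ := thins A Δ with hΘ
  set St := Θ.filter (fun θ => pcomp s θ = s) with hSt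
  have hfiber : ∀ θ₀ ∈ Θ, (Θ.filter (fun θ => pcomp s θ = pcomp s θ₀)).card = St.card := by
    intro θ₀ hθ₀
    have hθ₀' := (mem_thins A).1 hθ₀
    refine (Finset.card_bij (fun η _ => pcomp η θ₀) ?_ ?_ ?_).symm
    · intro η hη'
      obtain ⟨hηΘ, hηs⟩ := Finset.mem_filter.1 hη'
      have hηt := (mem_thins A).1 hηΘ
      refine Finset.mem_filter.2 ⟨(mem_thins A).2 (pcomp_thin_thin A hp hW hηt hθ₀'), ?_⟩
      rw [← pcomp_assoc, hηs]
    · intro η1 h1 η2 h2 heq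
      have t1 := (mem_thins A).1 (Finset.mem_filter.1 h1).1
      have t2 := (mem_thins A).1 (Finset.mem_filter.1 h2).1
      have e1 : pcomp (pcomp η1 θ₀) (star θ₀) = η1 := by
        rw [pcomp_assoc, pcomp_star_self A hp hW hθ₀', pcomp_diag_right t1.2.1]
      have e2 : pcomp (pcomp η2 θ₀) (star θ₀) = η2 := by
        rw [pcomp_assoc, pcomp_star_self A hp hW hθ₀', pcomp_diag_right t2.2.1]
      rw [← e1, ← e2, heq]
    · intro θ hθf
      obtain ⟨hθΘ, hθeq⟩ := Finset.mem_filter.1 hθf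
      have hθt := (mem_thins A).1 hθΘ
      have hstar := thin_star A hp hW hθ₀'
      have hx : pcomp (star θ₀) θ₀ = diagRel Δ := by
        have := pcomp_star_self A hp hW hstar
        rwa [star_star] at this
      refine ⟨pcomp θ (star θ₀), ?_, ?_⟩
      · refine Finset.mem_filter.2 ⟨(mem_thins A).2 (pcomp_thin_thin A hp hW hθt hstar), ?_⟩
        rw [← pcomp_assoc, hθeq, pcomp_assoc, pcomp_star_self A hp hW hθ₀',
          pcomp_diag_right hsub]
      · rw [pcomp_assoc, hx, pcomp_diag_right hθt.2.1]
  have hsum := Finset.card_eq_sum_card_image (fun θ => pcomp s θ) Θ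
  have hcards : ∀ b ∈ Θ.image (fun θ => pcomp s θ),
      (Θ.filter (fun θ => pcomp s θ = b)).card = St.card := by
    intro b hb
    obtain ⟨θ₀, hθ₀, rfl⟩ := Finset.mem_image.1 hb
    exact hfiber θ₀ hθ₀
  rw [Finset.sum_congr rfl hcards, Finset.sum_const, smul_eq_mul] at hsum
  have hΘcard : Θ.card = p := hW.2.2.1
  have hdvd : St.card ∣ p := by
    rw [← hΘcard, hsum]
    exact Dvd.intro_left _ rfl
  have hdiagSt : diagRel Δ ∈ St := by
    refine Finset.mem_filter.2 ⟨(mem_thins A).2 (diag_isThin A hW.1), pcomp_diag_right hsub⟩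
  have hη₀St : η₀ ∈ St := Finset.mem_filter.2 ⟨(mem_thins A).2 hη, hstab⟩
  have h2le : 1 < St.card := Finset.one_lt_card.2 ⟨η₀, hη₀St, diagRel Δ, hdiagSt, hne⟩
  rcases hp.eq_one_or_self_of_dvd _ hdvd with h1 | h1
  · omega
  · have hfull : St = Θ := by
      apply Finset.eq_of_subset_of_card_le (Finset.filter_subset _ _)
      rw [h1, hΘcard]
    intro θ hθ
    have : θ ∈ St := by rw [hfull]; exact (mem_thins A).2 hθ
    exact (Finset.mem_filter.1 this).2

lemma block_of_stab {Δ Λ : Finset Ω} (hW : WreathFiber p A Δ)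
    {s : Finset (Ω × Ω)} (hsub : s ⊆ Λ ×ˢ Δ) (hval : HasValency s p)
    (hstab : ∀ θ, IsThinOn A Δ θ → pcomp s θ = s) :
    ∀ {x y : Ω}, (x, y) ∈ s → nbr s x = nbr (eRel A Δ) y := by
  intro x y hxy
  have hyΔ : y ∈ Δ := (Finset.mem_product.1 (hsub hxy)).2
  have hsub2 : nbr (eRel A Δ) y ⊆ nbr s x := by
    intro z hz
    obtain ⟨θ, hθ, hyz⟩ := (mem_eRel A).1 (mem_nbr.1 hz)
    have : (x, z) ∈ pcomp s θ := mem_pcomp.2 ⟨y, hxy, hyz⟩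
    rw [hstab θ hθ] at this
    exact mem_nbr.2 this
  have hle : (nbr s x).card ≤ (nbr (eRel A Δ) y).card := by
    rw [card_nbr_eRel A hW hyΔ, nbr_card_of_val hval hxy]
  exact (Finset.eq_of_subset_of_card_le hsub2 hle).symm

lemma reg_of_blocks {Γ : Finset Ω} {u : Finset (Ω × Ω)}
    (h : ∀ {x γ : Ω}, (x, γ) ∈ u → nbr u x = nbr (eRel A Γ) γ) : Reg u := by
  intro x γ δ y h1 h2 h3
  have e1 : nbr u x = nbr (eRel A Γ) γ := h h1
  have e2 : nbr u δ = nbr (eRel A Γ) γ := h h2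
  have : y ∈ nbr u δ := mem_nbr.2 h3
  rw [e2, ← e1] at this
  exact mem_nbr.1 this

end CCProof

namespace CCProof
set_option linter.unusedSectionVars false
set_option maxHeartbeats 1000000

variable {Ω : Type} [Fintype Ω] [DecidableEq Ω] (A : CoherentConfig Ω) {p : ℕ}

/-- the basis relations contained in Δ × Γ -/
noncomputable def relsB (Δ Γ : Finset Ω) : Finset (Finset (Ω × Ω)) :=
  A.S.filter (fun s => s ⊆ Δ ×ˢ Γ)

lemma mem_relsB {Δ Γ : Finset Ω} {s : Finset (Ω × Ω)} :
    s ∈ relsB A Δ Γ ↔ s ∈ A.S ∧ s ⊆ Δ ×ˢ Γ := Finset.mem_filter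

lemma relOf_mem_relsB {Δ Γ : Finset Ω} (hΔ : IsFiber A Δ) (hΓ : IsFiber A Γ)
    {a b : Ω} (ha : a ∈ Δ) (hb : b ∈ Γ) : relOf A (a, b) ∈ relsB A Δ Γ := by
  refine (mem_relsB A).2 ⟨relOf_mem_S A _, ?_⟩
  have h := rel_sub_fibers A (relOf_mem_S A (a, b)) (mem_relOf A (a, b))
  rwa [← fiber_eq_fiberOf A hΔ ha, ← fiber_eq_fiberOf A hΓ hb] at h

lemma biUnion_relsB {Δ Γ : Finset Ω} (hΔ : IsFiber A Δ) (hΓ : IsFiber A Γ) :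
    (relsB A Δ Γ).biUnion id = Δ ×ˢ Γ := by
  ext ⟨a, b⟩
  simp only [Finset.mem_biUnion, id_eq]
  constructor
  · rintro ⟨s, hs, hmem⟩
    exact ((mem_relsB A).1 hs).2 hmem
  · intro h
    obtain ⟨ha, hb⟩ := Finset.mem_product.1 h
    exact ⟨relOf A (a, b), relOf_mem_relsB A hΔ hΓ ha hb, mem_relOf A _⟩

lemma rels_disjoint {s t : Finset (Ω × Ω)} (hs : s ∈ A.S) (ht : t ∈ A.S) (hne : s ≠ t) :
    Disjoint s t := by
  rw [Finset.disjoint_left]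
  intro q hq hq'
  exact hne (rel_eq_rel A hs ht hq hq')

lemma sum_card_relsB {Δ Γ : Finset Ω} (hΔ : IsFiber A Δ) (hΓ : IsFiber A Γ) :
    ∑ s ∈ relsB A Δ Γ, s.card = Δ.card * Γ.card := by
  have hdisj : ∀ s ∈ relsB A Δ Γ, ∀ t ∈ relsB A Δ Γ, s ≠ t → Disjoint (id s) (id t) := by
    intro s hs t ht hne
    exact rels_disjoint A ((mem_relsB A).1 hs).1 ((mem_relsB A).1 ht).1 hne
  have h := Finset.card_biUnion hdisj
  rw [biUnion_relsB A hΔ hΓ, Finset.card_product] at h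
  simpa using h.symm

section Inter
variable (hp : p.Prime)

/-- there are exactly `p` basis relations between two distinct fibers -/
lemma card_relsB_inter {Δ Γ : Finset Ω} (hp : p.Prime) (hWΔ : WreathFiber p A Δ)
    (hWΓ : WreathFiber p A Γ) (hne : Δ ≠ Γ)
    (hval : ∀ s ∈ relsB A Δ Γ, HasValency s p) :
    (relsB A Δ Γ).card = p := by
  have hsum := sum_card_relsB A hWΔ.1 hWΓ.1
  have hc : ∀ s ∈ relsB A Δ Γ, s.card = p ^ 3 := by
    intro s hs
    obtain ⟨hsS, hsub⟩ := (mem_relsB A).1 hs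
    rw [card_rel A hsS hsub hWΔ.1 (hval s hs), hWΔ.2.1]
    ring
  rw [Finset.sum_congr rfl hc, Finset.sum_const, smul_eq_mul, hWΔ.2.1, hWΓ.2.1] at hsum
  have h3 : (0:ℕ) < p ^ 3 := pow_pos hp.pos 3
  have : (relsB A Δ Γ).card * p ^ 3 = p * p ^ 3 := by
    rw [hsum]; ring
  exact Nat.eq_of_mul_eq_mul_right h3 this

/-- there are exactly `p - 1` non-thin basis relations inside a fiber -/
lemma card_nonthin_within {Δ : Finset Ω} (hp : p.Prime) (hW : WreathFiber p A Δ) :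
    ((relsB A Δ Δ) \ (thins A Δ)).card = p - 1 := by
  have hΔ : IsFiber A Δ := hW.1
  have hTsub : thins A Δ ⊆ relsB A Δ Δ := by
    intro θ hθ
    have h := (mem_thins A).1 hθ
    exact (mem_relsB A).2 ⟨h.1, h.2.1⟩
  have hsum := sum_card_relsB A hΔ hΔ
  rw [← Finset.sum_sdiff hTsub] at hsum
  have hThin : ∑ θ ∈ thins A Δ, θ.card = p * p ^ 2 := by
    have : ∀ θ ∈ thins A Δ, θ.card = p ^ 2 := by
      intro θ hθ
      rw [thin_card A hΔ ((mem_thins A).1 hθ), hW.2.1]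
    have ht : (thins A Δ).card = p := hW.2.2.1
    rw [Finset.sum_congr rfl this, Finset.sum_const, smul_eq_mul, ht]
  have hNT : ∀ s ∈ (relsB A Δ Δ) \ (thins A Δ), s.card = p ^ 3 := by
    intro s hs
    obtain ⟨hs1, hs2⟩ := Finset.mem_sdiff.1 hs
    obtain ⟨hsS, hsub⟩ := (mem_relsB A).1 hs1
    have hnt : ¬ IsThinOn A Δ s := fun h => hs2 ((mem_thins A).2 h)
    rw [card_rel A hsS hsub hΔ (val_p_of_not_thin A hW hsS hsub hnt), hW.2.1]
    ring
  have h1 : ∑ x ∈ (relsB A Δ Δ) \ (thins A Δ), x.card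
      = ((relsB A Δ Δ) \ (thins A Δ)).card * p ^ 3 := by
    rw [Finset.sum_congr rfl hNT, Finset.sum_const, smul_eq_mul]
  have hΔc : Δ.card = p ^ 2 := hW.2.1
  rw [h1, hThin, hΔc] at hsum
  have e1 : p * p ^ 2 = p ^ 3 := by ring
  have e2 : p ^ 2 * p ^ 2 = p * p ^ 3 := by ring
  rw [e1, e2] at hsum
  have key : (((relsB A Δ Δ) \ (thins A Δ)).card + 1) * p ^ 3 = p * p ^ 3 := by
    rw [add_mul, one_mul, hsum]
  have h3 : (0:ℕ) < p ^ 3 := pow_pos hp.pos 3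
  have := Nat.eq_of_mul_eq_mul_right h3 key
  omega

end Inter

end CCProof

namespace CCProof
set_option linter.unusedSectionVars false
set_option maxHeartbeats 1000000

variable {Ω : Type} [Fintype Ω] [DecidableEq Ω] (A : CoherentConfig Ω) {p : ℕ}

lemma star_sub {s : Finset (Ω × Ω)} {Δ Γ : Finset Ω} (h : s ⊆ Δ ×ˢ Γ) :
    star s ⊆ Γ ×ˢ Δ := by
  intro ⟨a, b⟩ hab
  have := h (mem_star.1 hab)
  rw [Finset.mem_product] at this ⊢
  exact ⟨this.2, this.1⟩

/-- a non-thin relation inside a fiber has full blocks as neighbourhoods -/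
lemma within_block {Δ : Finset Ω} (hp : p.Prime) (hW : WreathFiber p A Δ)
    {s : Finset (Ω × Ω)} (hs : s ∈ A.S) (hsub : s ⊆ Δ ×ˢ Δ) (hnt : ¬ IsThinOn A Δ s) :
    ∀ {x y : Ω}, (x, y) ∈ s → nbr s x = nbr (eRel A Δ) y := by
  have hΔ : IsFiber A Δ := hW.1
  have hval : HasValency s p := val_p_of_not_thin A hW hs hsub hnt
  -- pigeonhole: some nontrivial thin relation stabilizes s on the right
  have hmaps : ∀ θ ∈ thins A Δ, pcomp s θ ∈ (relsB A Δ Δ) \ (thins A Δ) := by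
    intro θ hθ
    have hθ' := (mem_thins A).1 hθ
    have h1 : pcomp s θ ∈ A.S := pcomp_mem_S_right A hp hW hs hsub hθ'
    have h2 : pcomp s θ ⊆ Δ ×ˢ Δ := pcomp_sub hsub hθ'.2.1
    refine Finset.mem_sdiff.2 ⟨(mem_relsB A).2 ⟨h1, h2⟩, ?_⟩
    intro hthin
    apply hnt
    have hrec : s = pcomp (pcomp s θ) (star θ) := by
      rw [pcomp_assoc, pcomp_star_self A hp hW hθ', pcomp_diag_right hsub]
    rw [hrec]
    exact pcomp_thin_thin A hp hW ((mem_thins A).1 hthin) (thin_star A hp hW hθ')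
  have hlt : ((relsB A Δ Δ) \ (thins A Δ)).card < (thins A Δ).card := by
    rw [card_nonthin_within A hp hW]
    have ht : (thins A Δ).card = p := hW.2.2.1
    rw [ht]
    have := hp.pos
    omega
  obtain ⟨θ₁, hθ₁, θ₂, hθ₂, hne12, heq⟩ :=
    Finset.exists_ne_map_eq_of_card_lt_of_maps_to hlt hmaps
  have t1 := (mem_thins A).1 hθ₁
  have t2 := (mem_thins A).1 hθ₂
  have hstar2 := thin_star A hp hW t2
  set η := pcomp θ₁ (star θ₂) with hη
  have hηthin : IsThinOn A Δ η := pcomp_thin_thin A hp hW t1 hstar2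
  have hx2 : pcomp (star θ₂) θ₂ = diagRel Δ := by
    have := pcomp_star_self A hp hW hstar2
    rwa [star_star] at this
  have hηne : η ≠ diagRel Δ := by
    intro h
    apply hne12
    have : pcomp η θ₂ = θ₁ := by
      rw [hη, pcomp_assoc, hx2, pcomp_diag_right t1.2.1]
    rw [← this, h, pcomp_diag_left t2.2.1]
  have hηstab : pcomp s η = s := by
    rw [hη, ← pcomp_assoc, heq, pcomp_assoc, pcomp_star_self A hp hW t2,
      pcomp_diag_right hsub]
  have hstab := stabilizer_full A hp hW hsub hηthin hηne hηstab
  exact fun {x y} hxy => block_of_stab A hW hsub hval hstab hxy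

/-- every relation inside a fiber is (pointwise) regular -/
lemma within_reg {Δ : Finset Ω} (hp : p.Prime) (hW : WreathFiber p A Δ)
    {s : Finset (Ω × Ω)} (hs : s ∈ A.S) (hsub : s ⊆ Δ ×ˢ Δ) : Reg s := by
  by_cases hth : IsThinOn A Δ s
  · intro x γ δ y h1 h2 h3
    have hstar := thin_star A hp hW hth
    have e1 : x = tf (star s) γ := tf_unique A hstar (mem_star.2 h1)
    have e2 : δ = tf (star s) γ := tf_unique A hstar (mem_star.2 h2)
    have e3 : γ = tf s x := tf_unique A hth h1
    have e4 : y = tf s δ := tf_unique A hth h3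
    rw [e4, ← e1.trans e2.symm, ← e3]
    exact h1
  · exact reg_of_blocks A (fun {x y} hxy => within_block A hp hW hs hsub hth hxy)

/-- structure of regular relations with valency p: neighbourhoods are blocks -/
lemma blocks_of_reg {Δ Γ : Finset Ω} (hp : p.Prime) (hWΔ : WreathFiber p A Δ)
    (hWΓ : WreathFiber p A Γ) {u : Finset (Ω × Ω)} (hu : u ∈ A.S)
    (hsub : u ⊆ Δ ×ˢ Γ) (hval : HasValency u p) (hreg : Reg u) :
    ∀ {x γ : Ω}, (x, γ) ∈ u → nbr u x = nbr (eRel A Γ) γ := by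
  have hstep : ∀ {γ γ' xx : Ω}, (xx, γ) ∈ u → (xx, γ') ∈ u → (γ, γ') ∈ eRel A Γ := by
    intro γ γ' xx h1 h2
    set v := relOf A (γ, γ') with hv
    have hvS : v ∈ A.S := relOf_mem_S A _
    have hvmem : (γ, γ') ∈ v := mem_relOf A _
    have hγΓ : γ ∈ Γ := (Finset.mem_product.1 (hsub h1)).2
    have hγ'Γ : γ' ∈ Γ := (Finset.mem_product.1 (hsub h2)).2
    have hvsub : v ⊆ Γ ×ˢ Γ := by
      have h := rel_sub_fibers A hvS hvmem
      rwa [← fiber_eq_fiberOf A hWΓ.1 hγΓ, ← fiber_eq_fiberOf A hWΓ.1 hγ'Γ] at h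
    by_cases hthin : IsThinOn A Γ v
    · exact (mem_eRel A).2 ⟨v, hthin, hvmem⟩
    exfalso
    have hvval : HasValency v p := val_p_of_not_thin A hWΓ hvS hvsub hthin
    have hdiag : (γ, γ) ∉ v := by
      intro hmem
      have hall := A.diag_union v hvS ⟨(γ, γ), hmem, rfl⟩
      have : v = diagRel Γ := rel_eq_rel A hvS hWΓ.1 hmem (mem_diagRel.2 ⟨hγΓ, rfl⟩)
      exact hthin (this ▸ diag_isThin A hWΓ.1)
    have hcom : A.c (star u) u v ≠ 0 :=
      c_ne_zero A (star_mem_S A hu) hu hvS hvmem (mem_star.2 h1) h2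
    have hK : insert γ (nbr v γ) ⊆ nbr u xx := by
      intro b hb
      rcases Finset.mem_insert.1 hb with rfl | hb
      · exact mem_nbr.2 h1
      · have hgb : (γ, b) ∈ v := mem_nbr.1 hb
        obtain ⟨xb, hxb1, hxb2⟩ := witness_of_c A (star_mem_S A hu) hu hvS hgb hcom
        have hxbγ : (xb, γ) ∈ u := mem_star.1 hxb1
        exact mem_nbr.2 (hreg h1 hxbγ hxb2)
    have hKcard : (insert γ (nbr v γ)).card = p + 1 := by
      rw [Finset.card_insert_of_notMem (fun h => hdiag (mem_nbr.1 h)),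
        nbr_card_of_val hvval hvmem]
    have := Finset.card_le_card hK
    rw [hKcard, nbr_card_of_val hval h1] at this
    omega
  intro x γ hxγ
  have hsub1 : nbr u x ⊆ nbr (eRel A Γ) γ := by
    intro γ'' hγ''
    exact mem_nbr.2 (hstep hxγ (mem_nbr.1 hγ''))
  have hγΓ : γ ∈ Γ := (Finset.mem_product.1 (hsub hxγ)).2
  apply Finset.eq_of_subset_of_card_le hsub1
  rw [card_nbr_eRel A hWΓ hγΓ, nbr_card_of_val hval hxγ]

/-- neighbourhoods of a regular valency-p relation are constant on blocks -/
lemma blocks_of_reg_left {Δ Γ : Finset Ω} (hp : p.Prime) (hWΔ : WreathFiber p A Δ)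
    (hWΓ : WreathFiber p A Γ) {u : Finset (Ω × Ω)} (hu : u ∈ A.S)
    (hsub : u ⊆ Δ ×ˢ Γ) (hvalstar : HasValency (star u) p) (hreg : Reg u) :
    ∀ {x x' γ : Ω}, (x, γ) ∈ u → (x, x') ∈ eRel A Δ → (x', γ) ∈ u := by
  intro x x' γ hxγ hxx'
  have h := blocks_of_reg A hp hWΓ hWΔ (star_mem_S A hu) (star_sub hsub) hvalstar
    hreg.star (mem_star.2 hxγ)
  have : x' ∈ nbr (star u) γ := by
    rw [h]
    exact mem_nbr.2 hxx'
  exact mem_star.1 (mem_nbr.1 this)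

end CCProof

namespace CCProof
set_option linter.unusedSectionVars false
set_option maxHeartbeats 1000000

variable {Ω : Type} [Fintype Ω] [DecidableEq Ω] (A : CoherentConfig Ω) {p : ℕ}

/-- abbreviation for the inter-fiber valency hypothesis -/
def InterVal (p : ℕ) : Prop :=
  ∀ u ∈ A.S, ∀ Δ Γ : Finset Ω, IsFiber A Δ → IsFiber A Γ → Δ ≠ Γ →
    u ⊆ Δ ×ˢ Γ → HasValency u p

lemma sub_fibers_of_mem {s : Finset (Ω × Ω)} {Δ Γ : Finset Ω} (hs : s ∈ A.S)
    (hΔ : IsFiber A Δ) (hΓ : IsFiber A Γ) {a b : Ω} (hab : (a, b) ∈ s)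
    (ha : a ∈ Δ) (hb : b ∈ Γ) : s ⊆ Δ ×ˢ Γ := by
  have h := rel_sub_fibers A hs hab
  rwa [← fiber_eq_fiberOf A hΔ ha, ← fiber_eq_fiberOf A hΓ hb] at h

/-- if one relation between two distinct fibers is regular, all of them are -/
lemma reg_pair_all {Λ Δ : Finset Ω} (hp : p.Prime) (hWΛ : WreathFiber p A Λ)
    (hWΔ : WreathFiber p A Δ) (hne : Λ ≠ Δ) (hinter : InterVal A p)
    {t t' : Finset (Ω × Ω)} (ht : t ∈ A.S) (htsub : t ⊆ Λ ×ˢ Δ) (hreg : Reg t)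
    (ht' : t' ∈ A.S) (ht'sub : t' ⊆ Λ ×ˢ Δ) : Reg t' := by
  have hvalt : HasValency t p := hinter t ht Λ Δ hWΛ.1 hWΔ.1 hne htsub
  have hvalt' : HasValency t' p := hinter t' ht' Λ Δ hWΛ.1 hWΔ.1 hne ht'sub
  obtain ⟨⟨lam0, γ₀⟩, h00⟩ := A.nonempty_mem t' ht'
  have hγ₀Δ : γ₀ ∈ Δ := (Finset.mem_product.1 (ht'sub h00)).2
  obtain ⟨μ₀, hμ₀⟩ := dom_full A (star_mem_S A ht) (star_sub htsub) hWΔ.1 hγ₀Δ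
  have hμ₀t : (μ₀, γ₀) ∈ t := mem_star.1 (mem_nbr.1 hμ₀)
  have hμ₀Λ : μ₀ ∈ Λ := (Finset.mem_product.1 (htsub hμ₀t)).1
  have hlam0 : lam0 ∈ Λ := (Finset.mem_product.1 (ht'sub h00)).1
  set v := relOf A (lam0, μ₀) with hv
  have hvS : v ∈ A.S := relOf_mem_S A _
  have hvmem : (lam0, μ₀) ∈ v := mem_relOf A _
  have hvsub : v ⊆ Λ ×ˢ Λ := sub_fibers_of_mem A hvS hWΛ.1 hWΛ.1 hvmem hlam0 hμ₀Λ
  have hc : A.c v t t' ≠ 0 := c_ne_zero A hvS ht ht' h00 hvmem hμ₀t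
  have hkey : ∀ {lam γ : Ω}, (lam, γ) ∈ t' → nbr t' lam = nbr (eRel A Δ) γ := by
    intro lam γ hlg
    obtain ⟨μ, hμ1, hμ2⟩ := witness_of_c A hvS ht ht' hlg hc
    have hsub1 : nbr t' lam ⊆ nbr (eRel A Δ) γ := by
      intro γ' hγ'
      have hlg' : (lam, γ') ∈ t' := mem_nbr.1 hγ'
      obtain ⟨μ', hμ'1, hμ'2⟩ := witness_of_c A hvS ht ht' hlg' hc
      have hblk := blocks_of_reg A hp hWΛ hWΔ ht htsub hvalt hreg hμ2
      by_cases hthin : IsThinOn A Λ v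
      · have e1 : μ = tf v lam := tf_unique A hthin hμ1
        have e2 : μ' = tf v lam := tf_unique A hthin hμ'1
        rw [e2, ← e1] at hμ'2
        have : γ' ∈ nbr t μ := mem_nbr.2 hμ'2
        rwa [hblk] at this
      · have hwb := within_block A hp hWΛ hvS hvsub hthin hμ1
        have hμ'e : μ' ∈ nbr (eRel A Λ) μ := by
          rw [← hwb]
          exact mem_nbr.2 hμ'1
        have hμμ' : (μ', μ) ∈ eRel A Λ := eRel_symm A hp hWΛ (mem_nbr.1 hμ'e)
        have hvalstar : HasValency (star t) p :=
          hinter (star t) (star_mem_S A ht) Δ Λ hWΔ.1 hWΛ.1 hne.symm (star_sub htsub)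
        have hμγ' : (μ, γ') ∈ t :=
          blocks_of_reg_left A hp hWΛ hWΔ ht htsub hvalstar hreg hμ'2 hμμ'
        have : γ' ∈ nbr t μ := mem_nbr.2 hμγ'
        rwa [hblk] at this
    have hγΔ : γ ∈ Δ := (Finset.mem_product.1 (ht'sub hlg)).2
    apply Finset.eq_of_subset_of_card_le hsub1
    rw [card_nbr_eRel A hWΔ hγΔ, nbr_card_of_val hvalt' hlg]
  exact reg_of_blocks A (Γ := Δ) (fun {x y} h => hkey h)

/-- composition of regular relations over three distinct fibers gives a regular relation -/
lemma reg_comp {Δ Γ Ξ : Finset Ω} (hp : p.Prime) (hWΔ : WreathFiber p A Δ)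
    (hWΓ : WreathFiber p A Γ) (hWΞ : WreathFiber p A Ξ) (hΔΓ : Δ ≠ Γ) (hΓΞ : Γ ≠ Ξ)
    (hΔΞ : Δ ≠ Ξ) (hinter : InterVal A p) {u u' : Finset (Ω × Ω)}
    (hu : u ∈ A.S) (husub : u ⊆ Δ ×ˢ Γ) (hureg : Reg u)
    (hu' : u' ∈ A.S) (hu'sub : u' ⊆ Γ ×ˢ Ξ) (hu'reg : Reg u') :
    ∃ v ∈ A.S, v ⊆ Δ ×ˢ Ξ ∧ Reg v := by
  have hvalu : HasValency u p := hinter u hu Δ Γ hWΔ.1 hWΓ.1 hΔΓ husub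
  have hvalu' : HasValency u' p := hinter u' hu' Γ Ξ hWΓ.1 hWΞ.1 hΓΞ hu'sub
  have hvalstaru' : HasValency (star u') p :=
    hinter (star u') (star_mem_S A hu') Ξ Γ hWΞ.1 hWΓ.1 hΓΞ.symm (star_sub hu'sub)
  obtain ⟨⟨x₀, γ₀⟩, h00⟩ := A.nonempty_mem u hu
  have hγ₀Γ : γ₀ ∈ Γ := (Finset.mem_product.1 (husub h00)).2
  have hx₀Δ : x₀ ∈ Δ := (Finset.mem_product.1 (husub h00)).1
  obtain ⟨z₀, hz₀⟩ := dom_full A hu' hu'sub hWΓ.1 hγ₀Γ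
  have hz₀' : (γ₀, z₀) ∈ u' := mem_nbr.1 hz₀
  have hz₀Ξ : z₀ ∈ Ξ := (Finset.mem_product.1 (hu'sub hz₀')).2
  set v := relOf A (x₀, z₀) with hv
  have hvS : v ∈ A.S := relOf_mem_S A _
  have hvmem : (x₀, z₀) ∈ v := mem_relOf A _
  have hvsub : v ⊆ Δ ×ˢ Ξ := sub_fibers_of_mem A hvS hWΔ.1 hWΞ.1 hvmem hx₀Δ hz₀Ξ
  have hvalv : HasValency v p := hinter v hvS Δ Ξ hWΔ.1 hWΞ.1 hΔΞ hvsub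
  have hc : A.c u u' v ≠ 0 := c_ne_zero A hu hu' hvS hvmem h00 hz₀'
  refine ⟨v, hvS, hvsub, reg_of_blocks A (Γ := Ξ) (fun {x z} hxz => ?_)⟩
  obtain ⟨γ, hγ1, hγ2⟩ := witness_of_c A hu hu' hvS hxz hc
  have hsub1 : nbr v x ⊆ nbr (eRel A Ξ) z := by
    intro z' hz'
    obtain ⟨γ', hγ'1, hγ'2⟩ := witness_of_c A hu hu' hvS (mem_nbr.1 hz') hc
    have hblku := blocks_of_reg A hp hWΔ hWΓ hu husub hvalu hureg hγ1
    have hγ'e : γ' ∈ nbr (eRel A Γ) γ := by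
      rw [← hblku]
      exact mem_nbr.2 hγ'1
    have hγγ' : (γ', γ) ∈ eRel A Γ := eRel_symm A hp hWΓ (mem_nbr.1 hγ'e)
    have hγz' : (γ, z') ∈ u' :=
      blocks_of_reg_left A hp hWΓ hWΞ hu' hu'sub hvalstaru' hu'reg hγ'2 hγγ'
    have hblku' := blocks_of_reg A hp hWΓ hWΞ hu' hu'sub hvalu' hu'reg hγ2
    have : z' ∈ nbr u' γ := mem_nbr.2 hγz'
    rwa [hblku'] at this
  have hzΞ : z ∈ Ξ := (Finset.mem_product.1 (hvsub hxz)).2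
  apply Finset.eq_of_subset_of_card_le hsub1
  rw [card_nbr_eRel A hWΞ hzΞ, nbr_card_of_val hvalv hxz]

end CCProof

namespace CCProof
set_option linter.unusedSectionVars false
set_option maxHeartbeats 1000000

variable {Ω : Type} [Fintype Ω] [DecidableEq Ω] (A : CoherentConfig Ω) {p : ℕ}

lemma double_count (D X : Finset Ω) (w : Finset (Ω × Ω)) :
    ∑ γ ∈ D, (X.filter (fun lam => (lam, γ) ∈ w)).card
      = ∑ lam ∈ X, (D.filter (fun γ => (lam, γ) ∈ w)).card := by
  classical
  simp only [Finset.card_filter]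
  rw [Finset.sum_comm]

/-- a non-regular relation between distinct fibers meets every block in exactly one point -/
lemma transversal {Λ Δ : Finset Ω} (hp : p.Prime) (hWΛ : WreathFiber p A Λ)
    (hWΔ : WreathFiber p A Δ) (hne : Λ ≠ Δ) (hinter : InterVal A p)
    {t : Finset (Ω × Ω)} (ht : t ∈ A.S) (htsub : t ⊆ Λ ×ˢ Δ) (hnreg : ¬ Reg t) :
    ∀ {lam : Ω}, lam ∈ Λ → ∀ {γ : Ω}, γ ∈ Δ →
      (nbr t lam ∩ nbr (eRel A Δ) γ).card = 1 := by
  intro lam hlam γ hγ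
  have hval : HasValency t p := hinter t ht Λ Δ hWΛ.1 hWΔ.1 hne htsub
  have hinj : ∀ θ₁ ∈ thins A Δ, ∀ θ₂ ∈ thins A Δ,
      pcomp t θ₁ = pcomp t θ₂ → θ₁ = θ₂ := by
    intro θ₁ hθ₁ θ₂ hθ₂ heq
    have t1 := (mem_thins A).1 hθ₁
    have t2 := (mem_thins A).1 hθ₂
    have hstar2 := thin_star A hp hWΔ t2
    set η := pcomp θ₁ (star θ₂) with hη
    have hηthin : IsThinOn A Δ η := pcomp_thin_thin A hp hWΔ t1 hstar2
    have hx2 : pcomp (star θ₂) θ₂ = diagRel Δ := by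
      have := pcomp_star_self A hp hWΔ hstar2
      rwa [star_star] at this
    by_cases hcase : η = diagRel Δ
    · have h1 : pcomp η θ₂ = θ₁ := by
        rw [hη, pcomp_assoc, hx2, pcomp_diag_right t1.2.1]
      rw [← h1, hcase, pcomp_diag_left t2.2.1]
    · exfalso
      have hηstab : pcomp t η = t := by
        rw [hη, ← pcomp_assoc, heq, pcomp_assoc, pcomp_star_self A hp hWΔ t2,
          pcomp_diag_right htsub]
      have hstab := stabilizer_full A hp hWΔ htsub hηthin hcase hηstab
      exact hnreg (reg_of_blocks A (Γ := Δ)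
        (fun {x y} h => block_of_stab A hWΔ htsub hval hstab h))
  have hmaps : ∀ θ ∈ thins A Δ, pcomp t θ ∈ relsB A Λ Δ := by
    intro θ hθ
    have hθ' := (mem_thins A).1 hθ
    exact (mem_relsB A).2 ⟨pcomp_mem_S_right A hp hWΔ ht htsub hθ',
      pcomp_sub htsub hθ'.2.1⟩
  have hvals : ∀ s ∈ relsB A Λ Δ, HasValency s p := by
    intro s hs
    obtain ⟨h1, h2⟩ := (mem_relsB A).1 hs
    exact hinter s h1 Λ Δ hWΛ.1 hWΔ.1 hne h2
  have hthinscard : (thins A Δ).card = p := hWΔ.2.2.1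
  have hinj' : Set.InjOn (fun θ => pcomp t θ) ↑(thins A Δ) := by
    intro a ha b hb h
    exact hinj a (Finset.mem_coe.1 ha) b (Finset.mem_coe.1 hb) h
  have himage : (thins A Δ).image (fun θ => pcomp t θ) = relsB A Λ Δ := by
    apply Finset.eq_of_subset_of_card_le
    · intro s hs
      obtain ⟨θ, hθ, rfl⟩ := Finset.mem_image.1 hs
      exact hmaps θ hθ
    · rw [card_relsB_inter A hp hWΛ hWΔ hne hvals, Finset.card_image_of_injOn hinj',
        hthinscard]
  set B := nbr (eRel A Δ) γ with hB
  have hBsub : ∀ b ∈ B, b ∈ Δ := by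
    intro b hb
    exact (Finset.mem_product.1 (eRel_sub A (mem_nbr.1 hb))).2
  have hpart : ∑ s' ∈ relsB A Λ Δ, (nbr s' lam ∩ B).card = B.card := by
    have hdisj : ∀ s' ∈ relsB A Λ Δ, ∀ t' ∈ relsB A Λ Δ, s' ≠ t' →
        Disjoint (nbr s' lam ∩ B) (nbr t' lam ∩ B) := by
      intro s' hs' t' ht' hne'
      have hd := rels_disjoint A ((mem_relsB A).1 hs').1 ((mem_relsB A).1 ht').1 hne'
      rw [Finset.disjoint_left] at hd ⊢
      intro b hb hb'
      exact hd (mem_nbr.1 (Finset.mem_inter.1 hb).1) (mem_nbr.1 (Finset.mem_inter.1 hb').1)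
    rw [← Finset.card_biUnion hdisj]
    congr 1
    apply Finset.Subset.antisymm
    · intro b hb
      obtain ⟨s', _, hb2⟩ := Finset.mem_biUnion.1 hb
      exact (Finset.mem_inter.1 hb2).2
    · intro b hb
      refine Finset.mem_biUnion.2 ⟨relOf A (lam, b),
        relOf_mem_relsB A hWΛ.1 hWΔ.1 hlam (hBsub b hb), ?_⟩
      exact Finset.mem_inter.2 ⟨mem_nbr.2 (mem_relOf A _), hb⟩
  have hterm : ∀ θ ∈ thins A Δ, (nbr (pcomp t θ) lam ∩ B).card = (nbr t lam ∩ B).card := by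
    intro θ hθ
    have hθ' := (mem_thins A).1 hθ
    have hnbr := nbr_pcomp_right A hWΔ.1 htsub hθ' lam
    have hXsub : ∀ a ∈ nbr t lam, a ∈ Δ := by
      intro a ha
      exact (Finset.mem_product.1 (htsub (mem_nbr.1 ha))).2
    have hfB : ∀ a ∈ Δ, (tf θ a ∈ B ↔ a ∈ B) := by
      intro a ha
      have hae : (a, tf θ a) ∈ eRel A Δ := (mem_eRel A).2 ⟨θ, hθ', tf_mem A hWΔ.1 hθ' ha⟩
      constructor
      · intro h
        exact mem_nbr.2 (eRel_trans A hp hWΔ (mem_nbr.1 h) (eRel_symm A hp hWΔ hae))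
      · intro h
        exact mem_nbr.2 (eRel_trans A hp hWΔ (mem_nbr.1 h) hae)
    have hseteq : nbr (pcomp t θ) lam ∩ B = (nbr t lam ∩ B).image (tf θ) := by
      rw [hnbr]
      apply Finset.Subset.antisymm
      · intro z hz
        obtain ⟨hz1, hz2⟩ := Finset.mem_inter.1 hz
        obtain ⟨a, ha, rfl⟩ := Finset.mem_image.1 hz1
        exact Finset.mem_image.2 ⟨a, Finset.mem_inter.2 ⟨ha, (hfB a (hXsub a ha)).1 hz2⟩, rfl⟩
      · intro z hz
        obtain ⟨a, ha, rfl⟩ := Finset.mem_image.1 hz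
        obtain ⟨ha1, ha2⟩ := Finset.mem_inter.1 ha
        exact Finset.mem_inter.2 ⟨Finset.mem_image.2 ⟨a, ha1, rfl⟩,
          (hfB a (hXsub a ha1)).2 ha2⟩
    rw [hseteq]
    apply Finset.card_image_of_injOn
    intro a ha b hb h
    exact tf_inj A hp hWΔ hθ' (hXsub a (Finset.mem_inter.1 (Finset.mem_coe.1 ha)).1)
      (hXsub b (Finset.mem_inter.1 (Finset.mem_coe.1 hb)).1) h
  have hsum2 : ∑ s' ∈ relsB A Λ Δ, (nbr s' lam ∩ B).card
      = (thins A Δ).card * (nbr t lam ∩ B).card := by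
    rw [← himage, Finset.sum_image (fun a ha b hb h => hinj a ha b hb h)]
    rw [Finset.sum_congr rfl hterm, Finset.sum_const, smul_eq_mul]
  have hBcard : B.card = p := card_nbr_eRel A hWΔ hγ
  rw [hsum2, hBcard, hthinscard] at hpart
  have hpos := hp.pos
  have : p * (nbr t lam ∩ B).card = p * 1 := by rw [mul_one]; exact hpart
  exact Nat.eq_of_mul_eq_mul_left hpos this

end CCProof

namespace CCProof
set_option linter.unusedSectionVars false
set_option maxHeartbeats 1000000

variable {Ω : Type} [Fintype Ω] [DecidableEq Ω] (A : CoherentConfig Ω) {p : ℕ}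

lemma inter_as_filter (r w : Finset (Ω × Ω)) (x γ : Ω) :
    nbr r x ∩ nbr (star w) γ = (nbr r x).filter (fun lam => (lam, γ) ∈ w) := by
  ext lam
  simp only [Finset.mem_inter, Finset.mem_filter, mem_nbr, mem_star]

lemma filter_as_inter (w : Finset (Ω × Ω)) (D : Finset Ω) (lam : Ω) :
    D.filter (fun γ => (lam, γ) ∈ w) = nbr w lam ∩ D := by
  ext γ
  simp only [Finset.mem_inter, Finset.mem_filter, mem_nbr]
  tauto

lemma card_nbr_star {Δ Λ : Finset Ω} (hΔ : IsFiber A Δ)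
    {t : Finset (Ω × Ω)} (ht : t ∈ A.S) (htsub : t ⊆ Λ ×ˢ Δ)
    (hvalstar : HasValency (star t) p) {x : Ω} (hx : x ∈ Δ) :
    (nbr (star t) x).card = p := by
  obtain ⟨μ, hμ⟩ := dom_full A (star_mem_S A ht) (star_sub htsub) hΔ hx
  exact nbr_card_of_val hvalstar (mem_nbr.1 hμ)

/-- key cross-counting: in-neighbourhoods along two non-regular relations from Λ
to the two fibers of a regular pair intersect in exactly one point -/
lemma cross_one {Λ Δ Γ : Finset Ω} (hp : p.Prime) (hWΛ : WreathFiber p A Λ)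
    (hWΔ : WreathFiber p A Δ) (hWΓ : WreathFiber p A Γ)
    (hΛΔ : Λ ≠ Δ) (hΛΓ : Λ ≠ Γ) (hΔΓ : Δ ≠ Γ) (hinter : InterVal A p)
    {t w : Finset (Ω × Ω)} (ht : t ∈ A.S) (htsub : t ⊆ Λ ×ˢ Δ)
    (hw : w ∈ A.S) (hwsub : w ⊆ Λ ×ˢ Γ) (hwnreg : ¬ Reg w)
    (hallreg : ∀ u' ∈ relsB A Δ Γ, Reg u')
    {x γ : Ω} (hx : x ∈ Δ) (hγ : γ ∈ Γ) :
    (nbr (star t) x ∩ nbr (star w) γ).card = 1 := by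
  set u' := relOf A (x, γ) with hu'
  have hu'B : u' ∈ relsB A Δ Γ := relOf_mem_relsB A hWΔ.1 hWΓ.1 hx hγ
  have hu'S : u' ∈ A.S := ((mem_relsB A).1 hu'B).1
  have hu'sub : u' ⊆ Δ ×ˢ Γ := ((mem_relsB A).1 hu'B).2
  have hu'reg : Reg u' := hallreg u' hu'B
  have hu'mem : (x, γ) ∈ u' := mem_relOf A _
  have hvalu' : HasValency u' p := hinter u' hu'S Δ Γ hWΔ.1 hWΓ.1 hΔΓ hu'sub
  have hblk := blocks_of_reg A hp hWΔ hWΓ hu'S hu'sub hvalu' hu'reg hu'mem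
  set D := nbr (eRel A Γ) γ with hD
  have hmemD : ∀ γ'' ∈ D, (x, γ'') ∈ u' := by
    intro γ'' hγ''
    have : γ'' ∈ nbr u' x := by rw [hblk]; exact hγ''
    exact mem_nbr.1 this
  have hstS : star t ∈ A.S := star_mem_S A ht
  set X := nbr (star t) x with hX
  have hXΛ : ∀ lam ∈ X, lam ∈ Λ := by
    intro lam hlam
    exact (Finset.mem_product.1 (htsub (mem_star.1 (mem_nbr.1 hlam)))).1
  have hvalue : ∀ γ'' ∈ D, (X ∩ nbr (star w) γ'').card = A.c (star t) w u' := by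
    intro γ'' hγ''
    have hcs := A.c_spec (star t) hstS w hw u' hu'S (x, γ'') (hmemD γ'' hγ'')
    rw [← hcs]
    congr 1
    rw [hX, inter_as_filter]
    ext lam
    simp only [Finset.mem_filter, mem_nbr, Finset.mem_univ, true_and]
  have hsum := double_count D X w
  have hrhs : ∀ lam ∈ X, (D.filter (fun γ'' => (lam, γ'') ∈ w)).card = 1 := by
    intro lam hlam
    rw [filter_as_inter]
    exact transversal A hp hWΛ hWΓ hΛΓ hinter hw hwsub hwnreg (hXΛ lam hlam) hγ
  have hXcard : X.card = p := card_nbr_star A hWΔ.1 ht htsub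
    (hinter (star t) hstS Δ Λ hWΔ.1 hWΛ.1 hΛΔ.symm (star_sub htsub)) hx
  have hlhs : ∀ γ'' ∈ D, (X.filter (fun lam => (lam, γ'') ∈ w)).card
      = A.c (star t) w u' := by
    intro γ'' hγ''
    rw [← hvalue γ'' hγ'']
    congr 1
    rw [inter_as_filter]
  have hDcard : D.card = p := card_nbr_eRel A hWΓ hγ
  rw [Finset.sum_congr rfl hlhs, Finset.sum_const, smul_eq_mul,
    Finset.sum_congr rfl hrhs, Finset.sum_const, smul_eq_mul, mul_one, hDcard, hXcard]
    at hsum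
  have hc1 : A.c (star t) w u' = 1 := by
    have := hp.pos
    have h2 : p * A.c (star t) w u' = p * 1 := by rw [mul_one]; exact hsum
    exact Nat.eq_of_mul_eq_mul_left this h2
  have hγD : γ ∈ D := mem_nbr.2 (eRel_refl A hWΓ.1 hγ)
  rw [hvalue γ hγD, hc1]

/-- in-neighbourhoods of a non-regular relation at two non-equivalent points of the
target fiber intersect in exactly one point -/
lemma within_one {Λ Δ : Finset Ω} (hp : p.Prime) (hWΛ : WreathFiber p A Λ)
    (hWΔ : WreathFiber p A Δ) (hΛΔ : Λ ≠ Δ) (hinter : InterVal A p)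
    {t : Finset (Ω × Ω)} (ht : t ∈ A.S) (htsub : t ⊆ Λ ×ˢ Δ) (htnreg : ¬ Reg t)
    {x x' : Ω} (hx : x ∈ Δ) (hx' : x' ∈ Δ) (hnb : (x, x') ∉ eRel A Δ) :
    (nbr (star t) x ∩ nbr (star t) x').card = 1 := by
  set v := relOf A (x, x') with hv
  have hvS : v ∈ A.S := relOf_mem_S A _
  have hvmem : (x, x') ∈ v := mem_relOf A _
  have hvsub : v ⊆ Δ ×ˢ Δ := sub_fibers_of_mem A hvS hWΔ.1 hWΔ.1 hvmem hx hx'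
  have hnthin : ¬ IsThinOn A Δ v := by
    intro h
    exact hnb ((mem_eRel A).2 ⟨v, h, hvmem⟩)
  have hwb := within_block A hp hWΔ hvS hvsub hnthin hvmem
  set D := nbr (eRel A Δ) x' with hD
  have hmemD : ∀ x'' ∈ D, (x, x'') ∈ v := by
    intro x'' hx''
    have : x'' ∈ nbr v x := by rw [hwb]; exact hx''
    exact mem_nbr.1 this
  have hstS : star t ∈ A.S := star_mem_S A ht
  set X := nbr (star t) x with hX
  have hXΛ : ∀ lam ∈ X, lam ∈ Λ := by
    intro lam hlam
    exact (Finset.mem_product.1 (htsub (mem_star.1 (mem_nbr.1 hlam)))).1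
  have hvalue : ∀ x'' ∈ D, (X ∩ nbr (star t) x'').card = A.c (star t) t v := by
    intro x'' hx''
    have hcs := A.c_spec (star t) hstS t ht v hvS (x, x'') (hmemD x'' hx'')
    rw [← hcs]
    congr 1
    rw [hX, inter_as_filter]
    ext lam
    simp only [Finset.mem_filter, mem_nbr, Finset.mem_univ, true_and]
  have hsum := double_count D X t
  have hrhs : ∀ lam ∈ X, (D.filter (fun x'' => (lam, x'') ∈ t)).card = 1 := by
    intro lam hlam
    rw [filter_as_inter]
    exact transversal A hp hWΛ hWΔ hΛΔ hinter ht htsub htnreg (hXΛ lam hlam) hx'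
  have hXcard : X.card = p := card_nbr_star A hWΔ.1 ht htsub
    (hinter (star t) hstS Δ Λ hWΔ.1 hWΛ.1 hΛΔ.symm (star_sub htsub)) hx
  have hlhs : ∀ x'' ∈ D, (X.filter (fun lam => (lam, x'') ∈ t)).card
      = A.c (star t) t v := by
    intro x'' hx''
    rw [← hvalue x'' hx'']
    congr 1
    rw [inter_as_filter]
  have hDcard : D.card = p := card_nbr_eRel A hWΔ hx'
  rw [Finset.sum_congr rfl hlhs, Finset.sum_const, smul_eq_mul,
    Finset.sum_congr rfl hrhs, Finset.sum_const, smul_eq_mul, mul_one, hDcard, hXcard]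
    at hsum
  have hc1 : A.c (star t) t v = 1 := by
    have := hp.pos
    have h2 : p * A.c (star t) t v = p * 1 := by rw [mul_one]; exact hsum
    exact Nat.eq_of_mul_eq_mul_left this h2
  have hx'D : x' ∈ D := mem_nbr.2 (eRel_refl A hWΔ.1 hx')
  rw [hvalue x' hx'D, hc1]

end CCProof

namespace CCProof
set_option linter.unusedSectionVars false
set_option maxHeartbeats 1000000

variable {Ω : Type} [Fintype Ω] [DecidableEq Ω] (A : CoherentConfig Ω) {p : ℕ}

lemma eq_of_inter_one {S T : Finset Ω} {a b : Ω} (h : (S ∩ T).card = 1)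
    (ha : a ∈ S ∩ T) (hb : b ∈ S ∩ T) : a = b :=
  Finset.card_le_one.1 h.le a ha b hb

lemma not_reg_star {s : Finset (Ω × Ω)} (h : ¬ Reg s) : ¬ Reg (star s) := by
  intro h2
  apply h
  have := h2.star
  rwa [star_star] at this

/-- the affine-plane contradiction: a fiber cannot be joined non-regularly to both
members of a regular pair of fibers -/
lemma net_contradiction {Λ Δ Γ : Finset Ω} (hp : p.Prime) (hWΛ : WreathFiber p A Λ)
    (hWΔ : WreathFiber p A Δ) (hWΓ : WreathFiber p A Γ)
    (hΛΔ : Λ ≠ Δ) (hΛΓ : Λ ≠ Γ) (hΔΓ : Δ ≠ Γ) (hinter : InterVal A p)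
    (hregΔΓ : ∀ u' ∈ relsB A Δ Γ, Reg u')
    (hnΛΔ : ∀ t ∈ relsB A Λ Δ, ¬ Reg t)
    (hnΛΓ : ∀ w ∈ relsB A Λ Γ, ¬ Reg w) : False := by
  -- pick base points
  obtain ⟨lam0, hlam0⟩ := Finset.card_pos.1
    (show 0 < Λ.card by rw [hWΛ.2.1]; exact pow_pos hp.pos 2)
  obtain ⟨xbar, hxbar⟩ := Finset.card_pos.1
    (show 0 < Δ.card by rw [hWΔ.2.1]; exact pow_pos hp.pos 2)
  obtain ⟨gbar, hgbar⟩ := Finset.card_pos.1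
    (show 0 < Γ.card by rw [hWΓ.2.1]; exact pow_pos hp.pos 2)
  set t := relOf A (lam0, xbar) with hti
  have htB : t ∈ relsB A Λ Δ := relOf_mem_relsB A hWΛ.1 hWΔ.1 hlam0 hxbar
  have ht : t ∈ A.S := ((mem_relsB A).1 htB).1
  have htsub : t ⊆ Λ ×ˢ Δ := ((mem_relsB A).1 htB).2
  have htnreg : ¬ Reg t := hnΛΔ t htB
  set w := relOf A (lam0, gbar) with hwi
  have hwB : w ∈ relsB A Λ Γ := relOf_mem_relsB A hWΛ.1 hWΓ.1 hlam0 hgbar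
  have hw : w ∈ A.S := ((mem_relsB A).1 hwB).1
  have hwsub : w ⊆ Λ ×ˢ Γ := ((mem_relsB A).1 hwB).2
  have hwnreg : ¬ Reg w := hnΛΓ w hwB
  have hvt : HasValency t p := hinter t ht Λ Δ hWΛ.1 hWΔ.1 hΛΔ htsub
  have hvw : HasValency w p := hinter w hw Λ Γ hWΛ.1 hWΓ.1 hΛΓ hwsub
  have hvts : HasValency (star t) p :=
    hinter (star t) (star_mem_S A ht) Δ Λ hWΔ.1 hWΛ.1 hΛΔ.symm (star_sub htsub)
  have hvws : HasValency (star w) p :=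
    hinter (star w) (star_mem_S A hw) Γ Λ hWΓ.1 hWΛ.1 hΛΓ.symm (star_sub hwsub)
  set Nt := nbr t lam0 with hNt
  set Nw := nbr w lam0 with hNw
  have hNtcard : Nt.card = p := nbr_card_of_val hvt (mem_relOf A _)
  have hNwcard : Nw.card = p := nbr_card_of_val hvw (mem_relOf A _)
  have hNtΔ : ∀ x ∈ Nt, x ∈ Δ := by
    intro x hx
    exact (Finset.mem_product.1 (htsub (mem_nbr.1 hx))).2
  have hNwΓ : ∀ γ ∈ Nw, γ ∈ Γ := by
    intro γ hγ
    exact (Finset.mem_product.1 (hwsub (mem_nbr.1 hγ))).2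
  -- the lines through lam0
  have hLsubΛ : ∀ x μ : Ω, μ ∈ nbr (star t) x → μ ∈ Λ := by
    intro x μ hμ
    exact (Finset.mem_product.1 (htsub (mem_star.1 (mem_nbr.1 hμ)))).1
  have hMsubΛ : ∀ γ μ : Ω, μ ∈ nbr (star w) γ → μ ∈ Λ := by
    intro γ μ hμ
    exact (Finset.mem_product.1 (hwsub (mem_star.1 (mem_nbr.1 hμ)))).1
  have hlamL : ∀ x ∈ Nt, lam0 ∈ nbr (star t) x := by
    intro x hx
    exact mem_nbr.2 (mem_star.2 (mem_nbr.1 hx))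
  have hlamM : ∀ γ ∈ Nw, lam0 ∈ nbr (star w) γ := by
    intro γ hγ
    exact mem_nbr.2 (mem_star.2 (mem_nbr.1 hγ))
  have hLcard : ∀ x ∈ Nt, (nbr (star t) x).card = p := by
    intro x hx
    exact nbr_card_of_val hvts (mem_star.2 (mem_nbr.1 hx))
  have hMcard : ∀ γ ∈ Nw, (nbr (star w) γ).card = p := by
    intro γ hγ
    exact nbr_card_of_val hvws (mem_star.2 (mem_nbr.1 hγ))
  -- distinct points of Nt are in different blocks
  have hNtblocks : ∀ x ∈ Nt, ∀ x' ∈ Nt, x ≠ x' → (x, x') ∉ eRel A Δ := by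
    intro x hx x' hx' hne hmem
    have h1 := transversal A hp hWΛ hWΔ hΛΔ hinter ht htsub htnreg hlam0 (hNtΔ x' hx')
    have hxin : x ∈ nbr t lam0 ∩ nbr (eRel A Δ) x' :=
      Finset.mem_inter.2 ⟨hx, mem_nbr.2 (eRel_symm A hp hWΔ hmem)⟩
    have hx'in : x' ∈ nbr t lam0 ∩ nbr (eRel A Δ) x' :=
      Finset.mem_inter.2 ⟨hx', mem_nbr.2 (eRel_refl A hWΔ.1 (hNtΔ x' hx'))⟩
    exact hne (eq_of_inter_one h1 hxin hx'in)
  have hNwblocks : ∀ γ ∈ Nw, ∀ γ' ∈ Nw, γ ≠ γ' → (γ, γ') ∉ eRel A Γ := by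
    intro γ hγ γ' hγ' hne hmem
    have h1 := transversal A hp hWΛ hWΓ hΛΓ hinter hw hwsub hwnreg hlam0 (hNwΓ γ' hγ')
    have hin : γ ∈ nbr w lam0 ∩ nbr (eRel A Γ) γ' :=
      Finset.mem_inter.2 ⟨hγ, mem_nbr.2 (eRel_symm A hp hWΓ hmem)⟩
    have hin' : γ' ∈ nbr w lam0 ∩ nbr (eRel A Γ) γ' :=
      Finset.mem_inter.2 ⟨hγ', mem_nbr.2 (eRel_refl A hWΓ.1 (hNwΓ γ' hγ'))⟩
    exact hne (eq_of_inter_one h1 hin hin')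
  -- intersection numbers of the lines
  have hLL : ∀ x ∈ Nt, ∀ x' ∈ Nt, x ≠ x' →
      (nbr (star t) x ∩ nbr (star t) x').card = 1 := by
    intro x hx x' hx' hne
    exact within_one A hp hWΛ hWΔ hΛΔ hinter ht htsub htnreg (hNtΔ x hx) (hNtΔ x' hx')
      (hNtblocks x hx x' hx' hne)
  have hMM : ∀ γ ∈ Nw, ∀ γ' ∈ Nw, γ ≠ γ' →
      (nbr (star w) γ ∩ nbr (star w) γ').card = 1 := by
    intro γ hγ γ' hγ' hne
    exact within_one A hp hWΛ hWΓ hΛΓ hinter hw hwsub hwnreg (hNwΓ γ hγ) (hNwΓ γ' hγ')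
      (hNwblocks γ hγ γ' hγ' hne)
  have hLM : ∀ x ∈ Nt, ∀ γ ∈ Nw,
      (nbr (star t) x ∩ nbr (star w) γ).card = 1 := by
    intro x hx γ hγ
    exact cross_one A hp hWΛ hWΔ hWΓ hΛΔ hΛΓ hΔΓ hinter ht htsub hw hwsub hwnreg
      hregΔΓ (hNtΔ x hx) (hNwΓ γ hγ)
  have hLB : ∀ x ∈ Nt, (nbr (star t) x ∩ nbr (eRel A Λ) lam0).card = 1 := by
    intro x hx
    exact transversal A hp hWΔ hWΛ hΛΔ.symm hinter (star_mem_S A ht) (star_sub htsub)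
      (not_reg_star htnreg) (hNtΔ x hx) hlam0
  have hMB : ∀ γ ∈ Nw, (nbr (star w) γ ∩ nbr (eRel A Λ) lam0).card = 1 := by
    intro γ hγ
    exact transversal A hp hWΓ hWΛ hΛΓ.symm hinter (star_mem_S A hw) (star_sub hwsub)
      (not_reg_star hwnreg) (hNwΓ γ hγ) hlam0
  -- the block through lam0
  set B0 := nbr (eRel A Λ) lam0 with hB0
  have hB0card : B0.card = p := card_nbr_eRel A hWΛ hlam0
  have hlamB0 : lam0 ∈ B0 := mem_nbr.2 (eRel_refl A hWΛ.1 hlam0)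
  have hB0Λ : ∀ μ ∈ B0, μ ∈ Λ := by
    intro μ hμ
    exact (Finset.mem_product.1 (eRel_sub A (mem_nbr.1 hμ))).2
  -- assemble the counting
  obtain ⟨m, rfl⟩ : ∃ m, p = m + 1 := ⟨p - 1, (Nat.succ_pred_eq_of_pos hp.pos).symm⟩
  have hm1 : 1 ≤ m := by
    have := hp.two_le
    omega
  set ST := Nt.biUnion (fun x => (nbr (star t) x).erase lam0) with hST
  set SW := Nw.biUnion (fun γ => (nbr (star w) γ).erase lam0) with hSW
  set SB := B0.erase lam0 with hSB
  have hSTcard : ST.card = (m + 1) * m := by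
    rw [hST, Finset.card_biUnion]
    · have : ∀ x ∈ Nt, ((nbr (star t) x).erase lam0).card = m := by
        intro x hx
        rw [Finset.card_erase_of_mem (hlamL x hx), hLcard x hx]
        omega
      rw [Finset.sum_congr rfl this, Finset.sum_const, smul_eq_mul, hNtcard]
    · intro x hx x' hx' hne
      rw [Function.onFun_apply, Finset.disjoint_left]
      intro μ hμ hμ'
      have h1 := Finset.mem_erase.1 hμ
      have h2 := Finset.mem_erase.1 hμ'
      have hmm : μ ∈ nbr (star t) x ∩ nbr (star t) x' :=
        Finset.mem_inter.2 ⟨h1.2, h2.2⟩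
      have hl : lam0 ∈ nbr (star t) x ∩ nbr (star t) x' :=
        Finset.mem_inter.2 ⟨hlamL x hx, hlamL x' hx'⟩
      exact h1.1 (eq_of_inter_one (hLL x hx x' hx' hne) hmm hl)
  have hSWcard : SW.card = (m + 1) * m := by
    rw [hSW, Finset.card_biUnion]
    · have : ∀ γ ∈ Nw, ((nbr (star w) γ).erase lam0).card = m := by
        intro γ hγ
        rw [Finset.card_erase_of_mem (hlamM γ hγ), hMcard γ hγ]
        omega
      rw [Finset.sum_congr rfl this, Finset.sum_const, smul_eq_mul, hNwcard]
    · intro γ hγ γ' hγ' hne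
      rw [Function.onFun_apply, Finset.disjoint_left]
      intro μ hμ hμ'
      have h1 := Finset.mem_erase.1 hμ
      have h2 := Finset.mem_erase.1 hμ'
      have hmm : μ ∈ nbr (star w) γ ∩ nbr (star w) γ' :=
        Finset.mem_inter.2 ⟨h1.2, h2.2⟩
      have hl : lam0 ∈ nbr (star w) γ ∩ nbr (star w) γ' :=
        Finset.mem_inter.2 ⟨hlamM γ hγ, hlamM γ' hγ'⟩
      exact h1.1 (eq_of_inter_one (hMM γ hγ γ' hγ' hne) hmm hl)
  have hSBcard : SB.card = m := by
    rw [hSB, Finset.card_erase_of_mem hlamB0, hB0card]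
    omega
  have hdisjTW : Disjoint ST SW := by
    rw [Finset.disjoint_left]
    intro μ hμ hμ'
    obtain ⟨x, hx, hμ1⟩ := Finset.mem_biUnion.1 hμ
    obtain ⟨γ, hγ, hμ2⟩ := Finset.mem_biUnion.1 hμ'
    have h1 := Finset.mem_erase.1 hμ1
    have h2 := Finset.mem_erase.1 hμ2
    have hmm : μ ∈ nbr (star t) x ∩ nbr (star w) γ := Finset.mem_inter.2 ⟨h1.2, h2.2⟩
    have hl : lam0 ∈ nbr (star t) x ∩ nbr (star w) γ :=
      Finset.mem_inter.2 ⟨hlamL x hx, hlamM γ hγ⟩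
    exact h1.1 (eq_of_inter_one (hLM x hx γ hγ) hmm hl)
  have hdisjBT : Disjoint SB ST := by
    rw [Finset.disjoint_left]
    intro μ hμ hμ'
    obtain ⟨x, hx, hμ1⟩ := Finset.mem_biUnion.1 hμ'
    have h1 := Finset.mem_erase.1 hμ
    have h2 := Finset.mem_erase.1 hμ1
    have hmm : μ ∈ nbr (star t) x ∩ B0 := Finset.mem_inter.2 ⟨h2.2, h1.2⟩
    have hl : lam0 ∈ nbr (star t) x ∩ B0 := Finset.mem_inter.2 ⟨hlamL x hx, hlamB0⟩
    exact h1.1 (eq_of_inter_one (hLB x hx) hmm hl)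
  have hdisjBW : Disjoint SB SW := by
    rw [Finset.disjoint_left]
    intro μ hμ hμ'
    obtain ⟨γ, hγ, hμ1⟩ := Finset.mem_biUnion.1 hμ'
    have h1 := Finset.mem_erase.1 hμ
    have h2 := Finset.mem_erase.1 hμ1
    have hmm : μ ∈ nbr (star w) γ ∩ B0 := Finset.mem_inter.2 ⟨h2.2, h1.2⟩
    have hl : lam0 ∈ nbr (star w) γ ∩ B0 := Finset.mem_inter.2 ⟨hlamM γ hγ, hlamB0⟩
    exact h1.1 (eq_of_inter_one (hMB γ hγ) hmm hl)
  have hsubset : SB ∪ ST ∪ SW ⊆ Λ.erase lam0 := by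
    intro μ hμ
    rcases Finset.mem_union.1 hμ with hμ | hμ
    · rcases Finset.mem_union.1 hμ with hμ | hμ
      · have h1 := Finset.mem_erase.1 hμ
        exact Finset.mem_erase.2 ⟨h1.1, hB0Λ μ h1.2⟩
      · obtain ⟨x, hx, hμ1⟩ := Finset.mem_biUnion.1 hμ
        have h1 := Finset.mem_erase.1 hμ1
        exact Finset.mem_erase.2 ⟨h1.1, hLsubΛ x μ h1.2⟩
    · obtain ⟨γ, hγ, hμ1⟩ := Finset.mem_biUnion.1 hμ
      have h1 := Finset.mem_erase.1 hμ1
      exact Finset.mem_erase.2 ⟨h1.1, hMsubΛ γ μ h1.2⟩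
  have hcard1 : (SB ∪ ST ∪ SW).card = m + (m + 1) * m + (m + 1) * m := by
    rw [Finset.card_union_of_disjoint, Finset.card_union_of_disjoint hdisjBT,
      hSBcard, hSTcard, hSWcard]
    rw [Finset.disjoint_union_left]
    exact ⟨hdisjBW, hdisjTW⟩
  have hcard2 : (Λ.erase lam0).card = (m + 1) ^ 2 - 1 := by
    rw [Finset.card_erase_of_mem hlam0, hWΛ.2.1]
  have hle := Finset.card_le_card hsubset
  rw [hcard1, hcard2] at hle
  have hsq : (m + 1) ^ 2 = m * m + 2 * m + 1 := by ring
  have hexp : (m + 1) * m = m * m + m := by ring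
  rw [hsq, hexp] at hle
  obtain ⟨k, hk⟩ : ∃ k, m * m = k := ⟨_, rfl⟩
  rw [hk] at hle
  omega

end CCProof

namespace CCProof
set_option linter.unusedSectionVars false
set_option maxHeartbeats 1000000

variable {Ω : Type} [Fintype Ω] [DecidableEq Ω] (A : CoherentConfig Ω) {p : ℕ}

/-- there is a regular basis relation between the two fibers -/
abbrev RegPair (X Y : Finset Ω) : Prop := ∃ r, r ∈ A.S ∧ r ⊆ X ×ˢ Y ∧ Reg r

lemma main_contra (hp : p.Prime)
    (hfib : ∀ Δ : Finset Ω, IsFiber A Δ → WreathFiber p A Δ) (hinter : InterVal A p)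
    {u : Finset (Ω × Ω)} (hu : u ∈ A.S) (hureg : Regular A u)
    (hnot : ¬ ∃ Δ, IsFiber A Δ ∧ u ⊆ Δ ×ˢ Δ)
    {t₀ : Finset (Ω × Ω)} (ht₀ : t₀ ∈ A.S) (ht₀n : ¬ Regular A t₀) : False := by
  obtain ⟨⟨a₀, b₀⟩, hab₀⟩ := A.nonempty_mem u hu
  set Δ := fiberOf A a₀ with hΔdef
  set Γ := fiberOf A b₀ with hΓdef
  have hΔ : IsFiber A Δ := isFiber_fiberOf A a₀
  have hΓ : IsFiber A Γ := isFiber_fiberOf A b₀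
  have husub : u ⊆ Δ ×ˢ Γ := rel_sub_fibers A hu hab₀
  have hΔΓ : Δ ≠ Γ := by
    intro h
    rw [← h] at husub
    exact hnot ⟨Δ, hΔ, husub⟩
  obtain ⟨⟨a₁, b₁⟩, hab₁⟩ := A.nonempty_mem t₀ ht₀
  set Λ := fiberOf A a₁ with hΛdef
  set Λ' := fiberOf A b₁ with hΛ'def
  have hΛ : IsFiber A Λ := isFiber_fiberOf A a₁
  have hΛ' : IsFiber A Λ' := isFiber_fiberOf A b₁
  have htsub : t₀ ⊆ Λ ×ˢ Λ' := rel_sub_fibers A ht₀ hab₁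
  have hΛΛ' : Λ ≠ Λ' := by
    intro h
    rw [← h] at htsub
    exact ht₀n ((regular_iff A ht₀).2 (within_reg A hp (hfib Λ hΛ) ht₀ htsub))
  have hsymm : ∀ {X Y : Finset Ω}, RegPair A X Y → RegPair A Y X := by
    rintro X Y ⟨r, hr, hrsub, hrreg⟩
    exact ⟨star r, star_mem_S A hr, star_sub hrsub, hrreg.star⟩
  have htrans : ∀ {X Y Z : Finset Ω}, IsFiber A X → IsFiber A Y → IsFiber A Z →
      X ≠ Y → Y ≠ Z → X ≠ Z → RegPair A X Y → RegPair A Y Z → RegPair A X Z := by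
    rintro X Y Z hX hY hZ hXY hYZ hXZ ⟨r, hr, hrsub, hrreg⟩ ⟨r', hr', hr'sub, hr'reg⟩
    obtain ⟨v, hv, hvsub, hvreg⟩ := reg_comp A hp (hfib X hX) (hfib Y hY) (hfib Z hZ)
      hXY hYZ hXZ hinter hr hrsub hrreg hr' hr'sub hr'reg
    exact ⟨v, hv, hvsub, hvreg⟩
  have hnet : ∀ {X Y Z : Finset Ω}, IsFiber A X → IsFiber A Y → IsFiber A Z →
      X ≠ Y → X ≠ Z → Y ≠ Z → RegPair A Y Z → ¬ RegPair A X Y → ¬ RegPair A X Z →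
      False := by
    rintro X Y Z hX hY hZ hXY hXZ hYZ ⟨r, hr, hrsub, hrreg⟩ hnXY hnXZ
    refine net_contradiction A hp (hfib X hX) (hfib Y hY) (hfib Z hZ) hXY hXZ hYZ hinter
      ?_ ?_ ?_
    · intro u' hu'
      exact reg_pair_all A hp (hfib Y hY) (hfib Z hZ) hYZ hinter hr hrsub hrreg
        ((mem_relsB A).1 hu').1 ((mem_relsB A).1 hu').2
    · intro tt htt hregt
      exact hnXY ⟨tt, ((mem_relsB A).1 htt).1, ((mem_relsB A).1 htt).2, hregt⟩
    · intro ww hww hregw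
      exact hnXZ ⟨ww, ((mem_relsB A).1 hww).1, ((mem_relsB A).1 hww).2, hregw⟩
  have hRΔΓ : RegPair A Δ Γ := ⟨u, hu, husub, (regular_iff A hu).1 hureg⟩
  have hnΛΛ'2 : ¬ RegPair A Λ Λ' := by
    rintro ⟨r, hr, hrsub, hrreg⟩
    exact ht₀n ((regular_iff A ht₀).2
      (reg_pair_all A hp (hfib Λ hΛ) (hfib Λ' hΛ') hΛΛ' hinter hr hrsub hrreg ht₀ htsub))
  by_cases h1 : Λ = Δ
  · by_cases h2 : Λ' = Γ
    · rw [h1, h2] at hnΛΛ'2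
      exact hnΛΛ'2 hRΔΓ
    · have hne1 : Λ' ≠ Δ := by
        rw [← h1]
        exact (Ne.symm hΛΛ')
      have hnXY : ¬ RegPair A Λ' Δ := by
        intro h
        rw [← h1] at h
        exact hnΛΛ'2 (hsymm h)
      have hnXZ : ¬ RegPair A Λ' Γ := by
        intro h
        exact hnXY (htrans hΛ' hΓ hΔ h2 (Ne.symm hΔΓ) hne1 h (hsymm hRΔΓ))
      exact hnet hΛ' hΔ hΓ hne1 h2 hΔΓ hRΔΓ hnXY hnXZ
  · by_cases h2 : Λ = Γ
    · by_cases h3 : Λ' = Δ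
      · rw [h2, h3] at hnΛΛ'2
        exact hnΛΛ'2 (hsymm hRΔΓ)
      · have hne2 : Λ' ≠ Γ := by
          rw [← h2]
          exact (Ne.symm hΛΛ')
        have hnXZ : ¬ RegPair A Λ' Γ := by
          intro h
          rw [← h2] at h
          exact hnΛΛ'2 (hsymm h)
        have hnXY : ¬ RegPair A Λ' Δ := by
          intro h
          exact hnXZ (htrans hΛ' hΔ hΓ h3 hΔΓ hne2 h hRΔΓ)
        exact hnet hΛ' hΔ hΓ h3 hne2 hΔΓ hRΔΓ hnXY hnXZ
    · by_cases h3 : RegPair A Λ Δ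
      · have hne3 : Λ' ≠ Δ := by
          intro h
          rw [h] at hnΛΛ'2
          exact hnΛΛ'2 h3
        have hne4 : Λ' ≠ Γ := by
          intro h
          rw [h] at hnΛΛ'2
          exact hnΛΛ'2 (htrans hΛ hΔ hΓ h1 hΔΓ h2 h3 hRΔΓ)
        have hnXY : ¬ RegPair A Λ' Δ := by
          intro h
          exact hnΛΛ'2 (htrans hΛ hΔ hΛ' h1 (Ne.symm hne3) hΛΛ' h3 (hsymm h))
        have hnXZ : ¬ RegPair A Λ' Γ := by
          intro h
          exact hnXY (htrans hΛ' hΓ hΔ hne4 (Ne.symm hΔΓ) hne3 h (hsymm hRΔΓ))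
        exact hnet hΛ' hΔ hΓ hne3 hne4 hΔΓ hRΔΓ hnXY hnXZ
      · have hnXZ : ¬ RegPair A Λ Γ := by
          intro h
          exact h3 (htrans hΛ hΓ hΔ h2 (Ne.symm hΔΓ) h1 h (hsymm hRΔΓ))
        exact hnet hΛ hΔ hΓ h1 h2 hΔΓ hRΔΓ h3 hnXZ

end CCProof


theorem stmt15 (p : ℕ) (hp : p.Prime) (A : CoherentConfig Ω)
    (hfib : ∀ Δ : Finset Ω, IsFiber A Δ → WreathFiber p A Δ)
    (hinter : ∀ u ∈ A.S, ∀ Δ Γ : Finset Ω, IsFiber A Δ → IsFiber A Γ → Δ ≠ Γ →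
      u ⊆ Δ ×ˢ Γ → HasValency u p) :
    (∀ s ∈ A.S, Regular A s) ∨
    (∀ s ∈ A.S, (∃ Δ : Finset Ω, IsFiber A Δ ∧ s ⊆ Δ ×ˢ Δ) ∨ ¬ Regular A s) := by
  by_cases hall : ∀ s ∈ A.S, Regular A s
  · exact Or.inl hall
  · right
    push_neg at hall
    obtain ⟨t₀, ht₀S, ht₀n⟩ := hall
    intro s hs
    by_cases hreg : Regular A s
    · left
      by_contra hnot
      exact CCProof.main_contra A hp hfib hinter hs hreg hnot ht₀S ht₀n
    · right
      exact hreg
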